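/- Let D be a digraph and 𝒰 a finite set of vertex sets of D. Then the following are equivalent: (i) D has an end in the closure of 𝒰; (ii) D has a vertex-direction in the closure of 𝒰; (iii) D contains a necklace attached to 𝒰. -/

import Mathlib

variable {V : Type*}

/-- Reachability from `a` to `b` by a directed walk staying inside the vertex set `S`. -/
def ReachIn (D : V → V → Prop) (S : Set V) (a b : V) : Prop :=
  a ∈ S ∧ b ∈ S ∧ Relation.ReflTransGen (fun x y => y ∈ S ∧ D x y) a b

/-- `C` is a strong component of the subdigraph of `D` induced on `S`. -/
def IsSCCIn (D : V → V → Prop) (S : Set V) (C : Set V) : Prop :=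
  ∃ a ∈ S, C = {b | ReachIn D S a b ∧ ReachIn D S b a}

/-- A directed ray in `D`. -/
def IsRay (D : V → V → Prop) (R : ℕ → V) : Prop :=
  Function.Injective R ∧ ∀ n, D (R n) (R (n + 1))

/-- A reverse directed ray in `D`. -/
def IsRevRay (D : V → V → Prop) (R : ℕ → V) : Prop :=
  Function.Injective R ∧ ∀ n, D (R (n + 1)) (R n)

/-- The ray `R` has a tail inside the vertex set `C`. -/
def HasTailIn (R : ℕ → V) (C : Set V) : Prop :=
  ∃ n, ∀ m, n ≤ m → R m ∈ C

/-- A solid ray: for every finite `X` it has a tail in some strong component of `D − X`. -/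
def Solid (D : V → V → Prop) (R : ℕ → V) : Prop :=
  IsRay D R ∧ ∀ X : Finset V, ∃ C, IsSCCIn D ((↑X : Set V)ᶜ) C ∧ HasTailIn R C

/-- Two solid rays are end-equivalent: for every finite `X` they have tails in the same
strong component of `D − X`. -/
def EndEquiv (D : V → V → Prop) (R R' : ℕ → V) : Prop :=
  ∀ X : Finset V, ∃ C, IsSCCIn D ((↑X : Set V)ᶜ) C ∧ HasTailIn R C ∧ HasTailIn R' C

/-- `Ω` is an end of `D`: the class of solid rays equivalent to some solid ray. -/
def IsEnd (D : V → V → Prop) (Ω : Set (ℕ → V)) : Prop :=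
  ∃ R, Solid D R ∧ Ω = {R' | Solid D R' ∧ EndEquiv D R R'}

/-- A (nonempty) directed path, recorded as its list of vertices. -/
def IsPathList (D : V → V → Prop) (l : List V) : Prop :=
  l ≠ [] ∧ l.Nodup ∧ l.Chain' D

/-- Infinitely many pairwise disjoint `A`–`B` paths in `D` (each meeting `A` precisely in its
first vertex and `B` precisely in its last vertex). -/
def DisjointPathsFrom (D : V → V → Prop) (A B : Set V) : Prop :=
  ∃ P : ℕ → List V,
    (∀ k, IsPathList D (P k)) ∧
    (∀ j k, j ≠ k → ∀ x ∈ P j, x ∉ P k) ∧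
    (∀ k, ∃ a, (P k).head? = some a ∧ a ∈ A) ∧
    (∀ k, ∃ b, (P k).getLast? = some b ∧ b ∈ B) ∧
    (∀ k, ∀ x ∈ (P k).tail, x ∉ A) ∧
    (∀ k, ∀ x ∈ (P k).dropLast, x ∉ B)

/-- A necklace in `D`: an inflated symmetric ray with finite branch sets (beads), given by its
beads together with the connecting (subdividing) paths in both directions. -/
structure Necklace (D : V → V → Prop) where
  bead : ℕ → Set V
  fwd : ℕ → List V
  bwd : ℕ → List V
  bead_fin : ∀ n, (bead n).Finite
  bead_nonempty : ∀ n, (bead n).Nonempty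
  bead_disj : ∀ m n, m ≠ n → Disjoint (bead m) (bead n)
  bead_strong : ∀ n, ∀ a ∈ bead n, ∀ b ∈ bead n, ReachIn D (bead n) a b
  fwd_path : ∀ n, IsPathList D (fwd n)
  bwd_path : ∀ n, IsPathList D (bwd n)
  fwd_head : ∀ n a, (fwd n).head? = some a → a ∈ bead n
  fwd_last : ∀ n b, (fwd n).getLast? = some b → b ∈ bead (n + 1)
  bwd_head : ∀ n a, (bwd n).head? = some a → a ∈ bead (n + 1)
  bwd_last : ∀ n b, (bwd n).getLast? = some b → b ∈ bead n
  fwd_inner : ∀ n, ∀ x ∈ (fwd n).tail.dropLast, ∀ m, x ∉ bead m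
  bwd_inner : ∀ n, ∀ x ∈ (bwd n).tail.dropLast, ∀ m, x ∉ bead m
  fwd_fwd_disj : ∀ m n, m ≠ n → ∀ x ∈ (fwd m).tail.dropLast, x ∉ (fwd n).tail.dropLast
  bwd_bwd_disj : ∀ m n, m ≠ n → ∀ x ∈ (bwd m).tail.dropLast, x ∉ (bwd n).tail.dropLast
  fwd_bwd_disj : ∀ m n, ∀ x ∈ (fwd m).tail.dropLast, x ∉ (bwd n).tail.dropLast

/-- The vertex set of a necklace. -/
def Necklace.verts {D : V → V → Prop} (N : Necklace D) : Set V :=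
  (⋃ n, N.bead n) ∪ {x | ∃ n, x ∈ N.fwd n ∨ x ∈ N.bwd n}

/-- A necklace is attached to `𝒰` if infinitely many of its beads meet every set in `𝒰`. -/
def Necklace.AttachedTo {D : V → V → Prop} (N : Necklace D) (𝒰 : Finset (Set V)) : Prop :=
  {n | ∀ U ∈ 𝒰, (N.bead n ∩ U).Nonempty}.Infinite

/-- A necklace represents the end of the solid ray `R`: for every finite `X`, all but finitely
many beads lie in the strong component of `D − X` in which `R` has a tail. -/
def NecklaceRepresents {D : V → V → Prop} (N : Necklace D) (R : ℕ → V) : Prop :=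
  ∀ X : Finset V, ∃ C, IsSCCIn D ((↑X : Set V)ᶜ) C ∧ HasTailIn R C ∧
    ∃ n₀, ∀ n, n₀ ≤ n → N.bead n ⊆ C

/-- `URankLE D 𝒰 S α`: the subdigraph of `D` induced on `S` has `𝒰`-rank at most `α`. -/
inductive URankLE (D : V → V → Prop) (𝒰 : Finset (Set V)) : Set V → Ordinal → Prop
  | base (S : Set V) (α : Ordinal) (U : Set V) (hU : U ∈ 𝒰) (h : (U ∩ S).Finite) :
      URankLE D 𝒰 S α
  | step (S : Set V) (α : Ordinal) (X : Finset V) (r : Set V → Ordinal)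
      (hr : ∀ C, IsSCCIn D (S \ ↑X) C → r C < α)
      (h : ∀ C, IsSCCIn D (S \ ↑X) C → URankLE D 𝒰 C (r C)) :
      URankLE D 𝒰 S α

/-- `D` (induced on `S`) has `𝒰`-rank exactly `α`. -/
def HasURank (D : V → V → Prop) (𝒰 : Finset (Set V)) (S : Set V) (α : Ordinal) : Prop :=
  URankLE D 𝒰 S α ∧ ∀ β < α, ¬ URankLE D 𝒰 S β

/-- A vertex-direction of `D`. -/
def IsVertexDirection (D : V → V → Prop) (f : Finset V → Set V) : Prop :=
  (∀ X : Finset V, IsSCCIn D ((↑X : Set V)ᶜ) (f X)) ∧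
  ∀ X Y : Finset V, X ⊆ Y → f Y ⊆ f X

/-- A separation `(A,B)` of `D`: `A ∪ B = V(D)` and no edge from `B∖A` to `A∖B`. -/
def IsSep (D : V → V → Prop) (A B : Set V) : Prop :=
  A ∪ B = Set.univ ∧ ∀ a ∈ B \ A, ∀ b ∈ A \ B, ¬ D a b

/-- A finite order separation `(A,B)` points towards the vertex-direction `f`. -/
def PointsTowards (D : V → V → Prop) (f : Finset V → Set V) (A B : Set V)
    (h : (A ∩ B).Finite) : Prop :=
  f h.toFinset ⊆ B \ A

/-- A finite order separation `(A,B)` points away from the vertex-direction `f`. -/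
def PointsAway (D : V → V → Prop) (f : Finset V → Set V) (A B : Set V)
    (h : (A ∩ B).Finite) : Prop :=
  f h.toFinset ⊆ A \ B

/-- The vertex `v` dominates the vertex-direction `f`. -/
def DomDir (D : V → V → Prop) (v : V) (f : Finset V → Set V) : Prop :=
  ∀ A B, IsSep D A B → ∀ h : (A ∩ B).Finite, PointsAway D f A B h → v ∈ A

/-- An infinite `v`–`B` fan: infinitely many `v`–`B` paths meeting pairwise precisely in `v`. -/
def Fan (D : V → V → Prop) (v : V) (B : Set V) : Prop :=
  ∃ P : ℕ → List V,
    (∀ k, IsPathList D (P k)) ∧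
    (∀ k, (P k).head? = some v) ∧
    (∀ k, 2 ≤ (P k).length) ∧
    (∀ k, ∃ b, (P k).getLast? = some b ∧ b ∈ B) ∧
    (∀ k, ∀ x ∈ (P k).dropLast, x ∉ B) ∧
    (∀ j k, j ≠ k → ∀ x ∈ (P j).tail, x ∉ (P k).tail)

/-- Limit edge between the ends of the solid rays `R` and `R'`. -/
def LimitEdgeEE (D : V → V → Prop) (R R' : ℕ → V) : Prop :=
  ∀ (X : Finset V) C C', IsSCCIn D ((↑X : Set V)ᶜ) C → HasTailIn R C →
    IsSCCIn D ((↑X : Set V)ᶜ) C' → HasTailIn R' C' → C ≠ C' →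
    ∃ a ∈ C, ∃ b ∈ C', D a b

/-- Limit edge from the vertex `v` to the end of the solid ray `R`. -/
def LimitEdgeVE (D : V → V → Prop) (v : V) (R : ℕ → V) : Prop :=
  ∀ (X : Finset V) C, IsSCCIn D ((↑X : Set V)ᶜ) C → HasTailIn R C → v ∉ C →
    ∃ b ∈ C, D v b

/-- Limit edge from the end of the solid ray `R` to the vertex `v`. -/
def LimitEdgeEV (D : V → V → Prop) (R : ℕ → V) (v : V) : Prop :=
  ∀ (X : Finset V) C, IsSCCIn D ((↑X : Set V)ᶜ) C → HasTailIn R C → v ∉ C →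
    ∃ a ∈ C, D a v

/-- A subdivided infinite out-star in `D` with centre `c`, given by its paths. -/
def IsStar (D : V → V → Prop) (c : V) (P : ℕ → List V) : Prop :=
  (∀ k, IsPathList D (P k)) ∧ (∀ k, (P k).head? = some c) ∧
  (∀ k, 2 ≤ (P k).length) ∧
  (∀ j k, j ≠ k → ∀ x ∈ (P j).tail, x ∉ (P k).tail)

/-- A directed comb in `D` with spine `R`, given by its (pairwise disjoint) paths each meeting
`R` precisely in its first vertex. -/
def IsComb (D : V → V → Prop) (R : ℕ → V) (P : ℕ → List V) : Prop :=
  IsRay D R ∧ (∀ k, IsPathList D (P k)) ∧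
  (∀ k, ∃ n, (P k).head? = some (R n)) ∧
  (∀ k, ∀ x ∈ (P k).tail, ∀ n, x ≠ R n) ∧
  (∀ j k, j ≠ k → ∀ x ∈ P j, x ∉ P k)

/-- A star in `D` whose `k`-th leaf is `a k`. -/
def StarAttachedWith (D : V → V → Prop) (a : ℕ → V) : Prop :=
  ∃ c P, IsStar D c P ∧ ∀ k, (P k).getLast? = some (a k)

/-- A comb in `D` whose `k`-th tooth is `a k`. -/
def CombAttachedWith (D : V → V → Prop) (a : ℕ → V) : Prop :=
  ∃ R P, IsComb D R P ∧ ∀ k, (P k).getLast? = some (a k)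

/-- `a` and `b` are consecutive entries of the list `l`. -/
def AdjInList (l : List V) (a b : V) : Prop :=
  ∃ l₁ l₂, l = l₁ ++ a :: b :: l₂

/-- The edge relation of (a subdigraph of `D` forming) the necklace `N`: all `D`-edges inside a
bead together with the edges of the connecting paths. -/
def Necklace.edges {D : V → V → Prop} (N : Necklace D) (a b : V) : Prop :=
  D a b ∧ ((∃ n, a ∈ N.bead n ∧ b ∈ N.bead n) ∨
    (∃ n, AdjInList (N.fwd n) a b ∨ AdjInList (N.bwd n) a b))

/-- A generalized ray: a directed ray (`true`) or a reverse directed ray (`false`). -/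
def IsGenRay (D : V → V → Prop) : Bool × (ℕ → V) → Prop
  | (true, R) => IsRay D R
  | (false, R) => IsRevRay D R

/-- Pre-end equivalence of generalized rays: infinitely many disjoint paths in both
directions. -/
def PreEquiv (D : V → V → Prop) (Q Q' : Bool × (ℕ → V)) : Prop :=
  DisjointPathsFrom D (Set.range Q.2) (Set.range Q'.2) ∧
  DisjointPathsFrom D (Set.range Q'.2) (Set.range Q.2)

/-- The pre-end `γ` includes the end represented by the solid ray `R`. -/
def IncludesEnd (D : V → V → Prop) (γ : Set (Bool × (ℕ → V))) (R : ℕ → V) : Prop :=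
  Solid D R ∧ ∀ R', Solid D R' → EndEquiv D R R' → (true, R') ∈ γ

/-- The set of edges of `D` from `A` to `B`. -/
def EdgesBetween (D : V → V → Prop) (A B : Set V) : Set (V × V) :=
  {e | D e.1 e.2 ∧ e.1 ∈ A ∧ e.2 ∈ B}

/-- A bundle of `D − X`. -/
def IsBundle (D : V → V → Prop) (X : Finset V) (E : Set (V × V)) : Prop :=
  E.Nonempty ∧
  ((∃ C C', IsSCCIn D ((↑X : Set V)ᶜ) C ∧ IsSCCIn D ((↑X : Set V)ᶜ) C' ∧ C ≠ C' ∧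
      E = EdgesBetween D C C') ∨
   (∃ v ∈ X, ∃ C, IsSCCIn D ((↑X : Set V)ᶜ) C ∧
      (E = EdgesBetween D {v} C ∨ E = EdgesBetween D C {v})))

/-- Compatibility `f(X) ⊇ f(Y)` between values of a direction (a strong component is regarded
as containing a bundle if it contains all its edges). -/
def DirCompat : Set V ⊕ Set (V × V) → Set V ⊕ Set (V × V) → Prop
  | Sum.inl C, Sum.inl C' => C' ⊆ C
  | Sum.inl C, Sum.inr E' => ∀ e ∈ E', e.1 ∈ C ∧ e.2 ∈ C
  | Sum.inr _, Sum.inl _ => False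
  | Sum.inr E, Sum.inr E' => E' ⊆ E

/-- A direction of `D`: maps each finite `X` to a strong component or a bundle of `D − X`,
compatibly. -/
def IsDirection (D : V → V → Prop) (f : Finset V → Set V ⊕ Set (V × V)) : Prop :=
  (∀ X : Finset V, (∃ C, IsSCCIn D ((↑X : Set V)ᶜ) C ∧ f X = Sum.inl C) ∨
    (∃ E, IsBundle D X E ∧ f X = Sum.inr E)) ∧
  ∀ X Y : Finset V, X ⊆ Y → DirCompat (f X) (f Y)

/-- An edge-direction: a direction whose value is a bundle for some finite `X`. -/
def IsEdgeDirection (D : V → V → Prop) (f : Finset V → Set V ⊕ Set (V × V)) : Prop :=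
  IsDirection D f ∧ ∃ (X : Finset V) (E : Set (V × V)), f X = Sum.inr E

/-- The three kinds of (potential) limit edges: end–end, vertex–end, end–vertex.
Ends are given as sets of (solid) rays. -/
inductive LimitEdgeObj (V : Type*) where
  | ee (Ω₁ Ω₂ : Set (ℕ → V))
  | ve (v : V) (Ω : Set (ℕ → V))
  | ev (Ω : Set (ℕ → V)) (v : V)

/-- `l` is a limit edge of `D`. -/
def IsLimitEdge (D : V → V → Prop) : LimitEdgeObj V → Prop
  | LimitEdgeObj.ee Ω₁ Ω₂ => IsEnd D Ω₁ ∧ IsEnd D Ω₂ ∧ Ω₁ ≠ Ω₂ ∧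
      ∀ R ∈ Ω₁, ∀ R' ∈ Ω₂, LimitEdgeEE D R R'
  | LimitEdgeObj.ve v Ω => IsEnd D Ω ∧ ∀ R ∈ Ω, LimitEdgeVE D v R
  | LimitEdgeObj.ev Ω v => IsEnd D Ω ∧ ∀ R ∈ Ω, LimitEdgeEV D R v

/-- `f` agrees with the map `f_λ` for the end–end limit edge `Ω₁Ω₂`. -/
def AgreesEE (D : V → V → Prop) (Ω₁ Ω₂ : Set (ℕ → V))
    (f : Finset V → Set V ⊕ Set (V × V)) : Prop :=
  ∀ (X : Finset V), ∀ R ∈ Ω₁, ∀ R' ∈ Ω₂, ∀ C C',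
    IsSCCIn D ((↑X : Set V)ᶜ) C → HasTailIn R C →
    IsSCCIn D ((↑X : Set V)ᶜ) C' → HasTailIn R' C' →
    (C = C' → f X = Sum.inl C) ∧ (C ≠ C' → f X = Sum.inr (EdgesBetween D C C'))

/-- `f` agrees with the map `f_λ` for the vertex–end limit edge `vΩ`. -/
def AgreesVE (D : V → V → Prop) (v : V) (Ω : Set (ℕ → V))
    (f : Finset V → Set V ⊕ Set (V × V)) : Prop :=
  ∀ (X : Finset V), ∀ R ∈ Ω, ∀ C, IsSCCIn D ((↑X : Set V)ᶜ) C → HasTailIn R C →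
    (v ∈ C → f X = Sum.inl C) ∧
    (v ∈ (↑X : Set V) → f X = Sum.inr (EdgesBetween D {v} C)) ∧
    (∀ C', IsSCCIn D ((↑X : Set V)ᶜ) C' → v ∈ C' → C' ≠ C →
      f X = Sum.inr (EdgesBetween D C' C))

/-- `f` agrees with the map `f_λ` for the end–vertex limit edge `Ωv`. -/
def AgreesEV (D : V → V → Prop) (Ω : Set (ℕ → V)) (v : V)
    (f : Finset V → Set V ⊕ Set (V × V)) : Prop :=
  ∀ (X : Finset V), ∀ R ∈ Ω, ∀ C, IsSCCIn D ((↑X : Set V)ᶜ) C → HasTailIn R C →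
    (v ∈ C → f X = Sum.inl C) ∧
    (v ∈ (↑X : Set V) → f X = Sum.inr (EdgesBetween D C {v})) ∧
    (∀ C', IsSCCIn D ((↑X : Set V)ᶜ) C' → v ∈ C' → C' ≠ C →
      f X = Sum.inr (EdgesBetween D C C'))

/-- `f` agrees with `f_λ` for the limit edge `l`. -/
def Agrees (D : V → V → Prop) : LimitEdgeObj V → (Finset V → Set V ⊕ Set (V × V)) → Prop
  | LimitEdgeObj.ee Ω₁ Ω₂, f => AgreesEE D Ω₁ Ω₂ f
  | LimitEdgeObj.ve v Ω, f => AgreesVE D v Ω f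
  | LimitEdgeObj.ev Ω v, f => AgreesEV D Ω v f


section Aux
open Classical

variable {D : V → V → Prop} {S S' C B : Set V} {a b c : V}

theorem ReachIn.monoS (hS : S ⊆ S') (h : ReachIn D S a b) : ReachIn D S' a b :=
  ⟨hS h.1, hS h.2.1, Relation.ReflTransGen.mono (r := fun x y => y ∈ S ∧ D x y) (p := fun x y => y ∈ S' ∧ D x y)
    (fun _ _ hxy => ⟨hS hxy.1, hxy.2⟩) a b h.2.2⟩

theorem ReachIn.trans (h1 : ReachIn D S a b) (h2 : ReachIn D S b c) : ReachIn D S a c :=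
  ⟨h1.1, h2.2.1, h1.2.2.trans h2.2.2⟩

theorem reachIn_refl (ha : a ∈ S) : ReachIn D S a a := ⟨ha, ha, .refl⟩

/-- The strong component of `a` in `D` restricted to `S`. -/
def sccOf (D : V → V → Prop) (S : Set V) (a : V) : Set V :=
  {b | ReachIn D S a b ∧ ReachIn D S b a}

theorem mem_sccOf_self (ha : a ∈ S) : a ∈ sccOf D S a :=
  ⟨reachIn_refl ha, reachIn_refl ha⟩

theorem isSCCIn_sccOf (ha : a ∈ S) : IsSCCIn D S (sccOf D S a) := ⟨a, ha, rfl⟩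

theorem sccOf_eq_of_mem (hb : b ∈ sccOf D S a) : sccOf D S b = sccOf D S a := by
  ext x
  exact ⟨fun hx => ⟨hb.1.trans hx.1, hx.2.trans hb.2⟩,
    fun hx => ⟨hb.2.trans hx.1, hx.2.trans hb.1⟩⟩

theorem IsSCCIn.eq_sccOf (h : IsSCCIn D S C) (hb : b ∈ C) : C = sccOf D S b := by
  obtain ⟨r, hr, rfl⟩ := h
  exact (sccOf_eq_of_mem hb).symm

theorem IsSCCIn.subsetS (h : IsSCCIn D S C) : C ⊆ S := by
  obtain ⟨r, hr, rfl⟩ := h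
  exact fun x hx => hx.1.2.1

theorem IsSCCIn.nonempty (h : IsSCCIn D S C) : C.Nonempty := by
  obtain ⟨r, hr, rfl⟩ := h
  exact ⟨r, mem_sccOf_self hr⟩

/-- Strong components are compatible across vertex removals: if `S ⊆ S'` and the two
components share a point then the smaller one is contained in the bigger one. -/
theorem scc_subset_scc {C' : Set V} {t : V} (hS : S ⊆ S') (h : IsSCCIn D S C)
    (h' : IsSCCIn D S' C') (ht : t ∈ C) (ht' : t ∈ C') : C ⊆ C' := by
  rw [h.eq_sccOf ht, h'.eq_sccOf ht']
  exact fun x hx => ⟨hx.1.monoS hS, hx.2.monoS hS⟩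

theorem scc_unique {C' : Set V} {t : V} (h : IsSCCIn D S C) (h' : IsSCCIn D S C')
    (ht : t ∈ C) (ht' : t ∈ C') : C = C' :=
  Set.Subset.antisymm (scc_subset_scc subset_rfl h h' ht ht')
    (scc_subset_scc subset_rfl h' h ht' ht)

private theorem mem_S_of_rtg (h : Relation.ReflTransGen (fun x y => y ∈ S ∧ D x y) a b)
    (ha : a ∈ S) : b ∈ S := by
  induction h with
  | refl => exact ha
  | tail _ h2 _ => exact h2.1

private theorem rtg_in_scc {r : V} (hr : r ∈ S) :
    ∀ {x y : V}, Relation.ReflTransGen (fun u v => v ∈ S ∧ D u v) x y →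
      x ∈ sccOf D S r → ReachIn D S y r → ReachIn D (sccOf D S r) x y := by
  intro x y h
  induction h with
  | refl => exact fun hx _ => reachIn_refl hx
  | @tail c y hxc hcy ih =>
    intro hx hyr
    have hxS : x ∈ S := hx.1.2.1
    have hcS : c ∈ S := mem_S_of_rtg hxc hxS
    have hcr : ReachIn D S c r := ⟨hcS, hr, (Relation.ReflTransGen.single (r := fun u v => v ∈ S ∧ D u v) hcy).trans hyr.2.2⟩
    have hcscc : c ∈ sccOf D S r := ⟨⟨hr, hcS, hx.1.2.2.trans hxc⟩, hcr⟩
    have hyscc : y ∈ sccOf D S r :=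
      ⟨⟨hr, hcy.1, hcscc.1.2.2.trans (Relation.ReflTransGen.single hcy)⟩, hyr⟩
    exact (ih hx hcr).trans ⟨hcscc, hyscc, Relation.ReflTransGen.single ⟨hyscc, hcy.2⟩⟩

/-- Within a strong component, any two vertices are joined by a walk staying inside the
component. -/
theorem IsSCCIn.reachIn (h : IsSCCIn D S C) (ha : a ∈ C) (hb : b ∈ C) : ReachIn D C a b := by
  obtain ⟨r, hr, rfl⟩ := h
  exact rtg_in_scc hr (ha.2.2.2.trans hb.1.2.2) ha hb.2

/- ### Walks as lists -/

theorem reachIn_exists_walk (h : ReachIn D S a b) :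
    ∃ l : List V, l.head? = some a ∧ l.getLast? = some b ∧ l.Chain' D ∧ ∀ x ∈ l, x ∈ S := by
  obtain ⟨ha, hb, hw⟩ := h
  clear hb
  induction hw with
  | refl => exact ⟨[a], rfl, rfl, List.isChain_singleton a, by simpa⟩
  | @tail c d _ hcd ih =>
    obtain ⟨l, h1, h2, h3, h4⟩ := ih
    have hl : l ≠ [] := by rintro rfl; simp at h1
    refine ⟨l ++ [d], ?_, ?_, ?_, ?_⟩
    · rwa [List.head?_append_of_ne_nil _ hl]
    · exact List.getLast?_concat
    · refine List.isChain_append.2 ⟨h3, List.isChain_singleton d, ?_⟩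
      intro x hx y hy
      rw [h2] at hx
      simp only [List.head?_cons, Option.mem_def, Option.some.injEq] at hx hy
      subst hx; subst hy
      exact hcd.2
    · intro x hx
      rcases List.mem_append.1 hx with hx | hx
      · exact h4 x hx
      · simp only [List.mem_singleton] at hx; exact hx ▸ hcd.1

private theorem walk_to_path_aux (D : V → V → Prop) :
    ∀ (n : ℕ) (l : List V), l.length ≤ n → l ≠ [] → l.Chain' D →
    ∃ m : List V, m ≠ [] ∧ m.Nodup ∧ m.Chain' D ∧ m.head? = l.head? ∧
      m.getLast? = l.getLast? ∧ ∀ x ∈ m, x ∈ l := by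
  intro n
  induction n with
  | zero =>
    intro l hl hne _
    exact absurd (List.eq_nil_of_length_eq_zero (Nat.le_zero.mp hl)) hne
  | succ n ih =>
    intro l hl hne hch
    rcases l with _ | ⟨a, t⟩
    · exact absurd rfl hne
    by_cases hat : a ∈ t
    · obtain ⟨t₁, t₂, rfl⟩ := List.append_of_mem hat
      have hsuf : (a :: t₂) <:+ (a :: (t₁ ++ a :: t₂)) := by
        refine ⟨a :: t₁, ?_⟩; simp
      have hlen : (a :: t₂).length ≤ n := by
        have := hl; simp [List.length_append] at this ⊢; omega
      obtain ⟨m, h1, h2, h3, h4, h5, h6⟩ :=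
        ih (a :: t₂) hlen (by simp) (hch.suffix hsuf)
      refine ⟨m, h1, h2, h3, by simpa using h4, ?_, fun x hx => hsuf.subset (h6 x hx)⟩
      rw [h5]
      have : (a :: (t₁ ++ a :: t₂)) = (a :: t₁) ++ (a :: t₂) := by simp
      rw [this, List.getLast?_append_of_ne_nil _ (by simp)]
    · rcases t with _ | ⟨b, t'⟩
      · exact ⟨[a], by simp, by simp, List.isChain_singleton a, rfl, rfl, by simp⟩
      obtain ⟨m, h1, h2, h3, h4, h5, h6⟩ := ih (b :: t') (by simpa using hl) (by simp)
        (List.isChain_cons.1 hch).2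
      have hmb : m.head? = some b := by simpa using h4
      refine ⟨a :: m, by simp, ?_, ?_, by simp, ?_, ?_⟩
      · exact List.nodup_cons.2 ⟨fun hx => hat (h6 a hx), h2⟩
      · refine List.isChain_cons.2 ⟨?_, h3⟩
        intro y hy
        rw [hmb] at hy
        simp only [Option.mem_def, Option.some.injEq] at hy
        subst hy
        exact (List.isChain_cons_cons.1 hch).1
      · rcases m with _ | ⟨c, m'⟩
        · exact absurd rfl h1
        rw [List.getLast?_cons_cons, h5, List.getLast?_cons_cons]
      · intro x hx
        rcases List.mem_cons.1 hx with rfl | hx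
        · exact List.mem_cons_self
        · exact List.mem_cons_of_mem _ (h6 x hx)

theorem walk_to_path {l : List V} (hne : l ≠ []) (hch : l.Chain' D) :
    ∃ m : List V, m ≠ [] ∧ m.Nodup ∧ m.Chain' D ∧ m.head? = l.head? ∧
      m.getLast? = l.getLast? ∧ ∀ x ∈ m, x ∈ l :=
  walk_to_path_aux D l.length l le_rfl hne hch

/-- A directed nodup path inside `S` between two mutually reachable points. -/
theorem reachIn_exists_path (h : ReachIn D S a b) :
    ∃ l : List V, l ≠ [] ∧ l.Nodup ∧ l.Chain' D ∧ l.head? = some a ∧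
      l.getLast? = some b ∧ ∀ x ∈ l, x ∈ S := by
  obtain ⟨w, h1, h2, h3, h4⟩ := reachIn_exists_walk h
  have hw : w ≠ [] := by rintro rfl; simp at h1
  obtain ⟨m, g1, g2, g3, g4, g5, g6⟩ := walk_to_path hw h3
  exact ⟨m, g1, g2, g3, g4.trans h1, g5.trans h2, fun x hx => h4 x (g6 x hx)⟩

/-- A walk list yields reachability inside any superset of its vertices. -/
theorem walk_reachIn : ∀ (l : List V), l.Chain' D → (∀ x ∈ l, x ∈ S) →
    ∀ {a b : V}, l.head? = some a → l.getLast? = some b → ReachIn D S a b := by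
  intro l
  induction l with
  | nil => intro _ _ a b h; simp at h
  | cons x t ih =>
    intro hch hmem a b hh hl
    have hax : x = a := by simpa using hh
    subst hax
    rcases t with _ | ⟨y, t'⟩
    · have : x = b := by simpa using hl
      subst this
      exact reachIn_refl (hmem x (by simp))
    · have hstep : D x y := (List.isChain_cons_cons.1 hch).1
      have hrest := ih (List.isChain_cons_cons.1 hch).2 (fun z hz => hmem z (List.mem_cons_of_mem _ hz))
        rfl (by rwa [List.getLast?_cons_cons] at hl)
      exact ⟨hmem x (by simp), hrest.2.1,
        Relation.ReflTransGen.head ⟨hmem y (by simp), hstep⟩ hrest.2.2⟩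

/-- Every vertex of a walk is reachable from the head and reaches the last vertex. -/
theorem walk_mem_reach {l : List V} (hch : l.Chain' D) (hmem : ∀ x ∈ l, x ∈ S)
    {a b x : V} (hh : l.head? = some a) (hl : l.getLast? = some b) (hx : x ∈ l) :
    ReachIn D S a x ∧ ReachIn D S x b := by
  obtain ⟨l₁, l₂, rfl⟩ := List.append_of_mem hx
  constructor
  · refine walk_reachIn (l₁ ++ [x]) (hch.prefix ?_) (fun z hz => hmem z ?_) ?_ (by simp)
    · exact ⟨l₂, by simp⟩
    · rcases List.mem_append.1 hz with h | h
      · exact List.mem_append.2 (Or.inl h)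
      · simp only [List.mem_singleton] at h; subst h; simp
    · rcases l₁ with _ | ⟨u, t⟩
      · simpa using hh
      · simpa using hh
  · refine walk_reachIn (x :: l₂) (hch.suffix ⟨l₁, rfl⟩) (fun z hz => hmem z ?_) rfl ?_
    · exact List.mem_append.2 (Or.inr hz)
    · rw [← hl, List.getLast?_append_of_ne_nil _ (by simp)]

end Aux

section Aux2

variable {D : V → V → Prop} {S C B : Set V} {a b c : V}

theorem mem_of_getLast?_eq {l : List V} (h : l.getLast? = some b) : b ∈ l := by
  obtain ⟨hne, rfl⟩ := List.mem_getLast?_eq_getLast (l := l) (x := b) (by rw [h]; rfl)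
  exact List.getLast_mem hne

theorem mem_of_head?_eq {l : List V} (h : l.head? = some a) : a ∈ l :=
  List.mem_of_mem_head? (by rw [h]; rfl)

/-- Trim a walk to its first entry into `T`. -/
theorem trim_first (T : Set V) : ∀ (l : List V) (b : V), l.getLast? = some b → b ∈ T →
    ∃ p : List V, p <+: l ∧ p ≠ [] ∧ p.head? = l.head? ∧
      (∃ u, p.getLast? = some u ∧ u ∈ T) ∧ ∀ x ∈ p.dropLast, x ∉ T := by
  intro l
  induction l with
  | nil => intro b h; simp at h
  | cons a t ih =>
    intro b hb hbT
    by_cases haT : a ∈ T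
    · exact ⟨[a], ⟨t, rfl⟩, by simp, by simp, ⟨a, by simp, haT⟩, by simp⟩
    · rcases t with _ | ⟨d, t'⟩
      · have : a = b := by simpa using hb
        exact absurd (this ▸ hbT) haT
      · obtain ⟨p, hp1, hp2, hp3, hp4, hp5⟩ := ih b (by rwa [List.getLast?_cons_cons] at hb) hbT
        obtain ⟨ph, pt, rfl⟩ := List.exists_cons_of_ne_nil hp2
        refine ⟨a :: ph :: pt, ?_, by simp, by simp, ?_, ?_⟩
        · obtain ⟨r, hr⟩ := hp1
          exact ⟨r, by rw [List.cons_append, hr]⟩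
        · obtain ⟨u, hu1, hu2⟩ := hp4
          exact ⟨u, by rwa [List.getLast?_cons_cons], hu2⟩
        · intro x hx
          rw [List.dropLast_cons_of_ne_nil (by simp)] at hx
          rcases List.mem_cons.1 hx with rfl | hx
          · exact haT
          · exact hp5 x hx

private theorem trim_last_aux (T : Set V) : ∀ (n : ℕ) (l : List V), l.length ≤ n →
    ∀ (a : V), l.head? = some a → a ∈ T →
    ∃ s : List V, s <:+ l ∧ s ≠ [] ∧ s.getLast? = l.getLast? ∧
      (∃ u, s.head? = some u ∧ u ∈ T) ∧ ∀ x ∈ s.tail, x ∉ T := by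
  intro n
  induction n with
  | zero =>
    intro l hl a ha _
    have : l = [] := List.eq_nil_of_length_eq_zero (Nat.le_zero.mp hl)
    subst this; simp at ha
  | succ n ih =>
    intro l hl a ha haT
    obtain ⟨a', t, rfl⟩ := List.exists_cons_of_ne_nil (l := l) (by rintro rfl; simp at ha)
    have haa : a' = a := by simpa using ha
    subst haa
    by_cases hT : ∃ x ∈ t, x ∈ T
    · obtain ⟨x, hx, hxT⟩ := hT
      obtain ⟨t₁, t₂, rfl⟩ := List.append_of_mem hx
      have hlen : (x :: t₂).length ≤ n := by
        simp [List.length_append] at hl ⊢; omega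
      obtain ⟨s, hs1, hs2, hs3, hs4, hs5⟩ := ih (x :: t₂) hlen x rfl hxT
      refine ⟨s, ?_, hs2, ?_, hs4, hs5⟩
      · exact hs1.trans ⟨a' :: t₁, by simp⟩
      · rw [hs3]
        have : a' :: (t₁ ++ x :: t₂) = (a' :: t₁) ++ (x :: t₂) := by simp
        rw [this, List.getLast?_append_of_ne_nil _ (by simp)]
    · push_neg at hT
      exact ⟨a' :: t, List.suffix_rfl, by simp, rfl, ⟨a', rfl, haT⟩, hT⟩

theorem trim_last (T : Set V) (l : List V) (a : V) (ha : l.head? = some a) (haT : a ∈ T) :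
    ∃ s : List V, s <:+ l ∧ s ≠ [] ∧ s.getLast? = l.getLast? ∧
      (∃ u, s.head? = some u ∧ u ∈ T) ∧ ∀ x ∈ s.tail, x ∉ T :=
  trim_last_aux T l.length l le_rfl a ha haT

/-- A set with a "hub" vertex mutually reachable (inside the set) from everywhere. -/
def Centered (D : V → V → Prop) (B : Set V) (c : V) : Prop :=
  c ∈ B ∧ ∀ b ∈ B, ReachIn D B c b ∧ ReachIn D B b c

theorem Centered.reach (h : Centered D B c) (ha : a ∈ B) (hb : b ∈ B) : ReachIn D B a b :=
  (h.2 a ha).2.trans (h.2 b hb).1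

theorem Centered.extend (h : Centered D B c) {l : List V} (hch : l.Chain' D)
    (hh : ∃ a, l.head? = some a ∧ a ∈ B) (hl : ∃ b, l.getLast? = some b ∧ b ∈ B) :
    Centered D (B ∪ {x | x ∈ l}) c := by
  refine ⟨Or.inl h.1, ?_⟩
  intro b hb
  rcases hb with hb | hb
  · exact ⟨(h.2 b hb).1.monoS Set.subset_union_left, (h.2 b hb).2.monoS Set.subset_union_left⟩
  · obtain ⟨a, ha1, ha2⟩ := hh
    obtain ⟨e, he1, he2⟩ := hl
    have h1 := walk_mem_reach (S := B ∪ {x | x ∈ l}) hch (fun x hx => Or.inr hx) ha1 he1 hb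
    exact ⟨((h.2 a ha2).1.monoS Set.subset_union_left).trans h1.1,
      h1.2.trans ((h.2 e he2).2.monoS Set.subset_union_left)⟩

theorem walk_glue {l m : List V} {x : V} (hl : l.Chain' D) (hm : m.Chain' D)
    (h1 : l.getLast? = some x) (h2 : m.head? = some x) :
    (l ++ m.tail).Chain' D ∧ (l ++ m.tail).head? = l.head? ∧
      (l ++ m.tail).getLast? = m.getLast? ∧ ∀ y ∈ l ++ m.tail, y ∈ l ∨ y ∈ m := by
  obtain ⟨x', mt, rfl⟩ := List.exists_cons_of_ne_nil (l := m) (by rintro rfl; simp at h2)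
  have hxx : x' = x := by simpa using h2
  subst hxx
  have hlne : l ≠ [] := by rintro rfl; simp at h1
  refine ⟨?_, List.head?_append_of_ne_nil _ hlne, ?_, ?_⟩
  · refine List.isChain_append.2 ⟨hl, (List.isChain_cons.1 hm).2, ?_⟩
    intro u hu y hy
    rw [h1] at hu
    simp only [Option.mem_def, Option.some.injEq] at hu
    subst hu
    exact (List.isChain_cons.1 hm).1 y hy
  · rcases mt with _ | ⟨z, mt'⟩
    · simpa using h1
    · simp only [List.tail_cons]
      rw [List.getLast?_append_of_ne_nil _ (by simp), List.getLast?_cons_cons]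
  · intro y hy
    rcases List.mem_append.1 hy with hy | hy
    · exact Or.inl hy
    · exact Or.inr (List.mem_cons_of_mem _ hy)

/-- Build a finite centered "hull" inside a strong component, hitting every set of `𝒰`. -/
theorem exists_hull {𝒰 : Finset (Set V)} (h : IsSCCIn D S C)
    (hU : ∀ U ∈ 𝒰, (C ∩ U).Nonempty) :
    ∃ (K : Set V) (c : V), K ⊆ C ∧ K.Finite ∧ Centered D K c ∧
      (∀ U ∈ 𝒰, (K ∩ U).Nonempty) := by
  obtain ⟨c, hc⟩ := h.nonempty
  suffices h' : ∀ (𝒱 : Finset (Set V)), (∀ U ∈ 𝒱, (C ∩ U).Nonempty) →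
      ∃ K : Set V, K ⊆ C ∧ K.Finite ∧ Centered D K c ∧ (∀ U ∈ 𝒱, (K ∩ U).Nonempty) by
    obtain ⟨K, h1, h2, h3, h4⟩ := h' 𝒰 hU
    exact ⟨K, c, h1, h2, h3, h4⟩
  intro 𝒱
  classical
  induction 𝒱 using Finset.induction with
  | empty =>
    intro _
    refine ⟨{c}, by simpa using hc, Set.finite_singleton c, ⟨rfl, ?_⟩, by simp⟩
    rintro b rfl
    exact ⟨reachIn_refl rfl, reachIn_refl rfl⟩
  | @insert U 𝒱 hUV ih =>
    intro hmem
    obtain ⟨K, h1, h2, h3, h4⟩ := ih fun W hW => hmem W (Finset.mem_insert_of_mem hW)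
    obtain ⟨x, hxC, hxU⟩ := hmem U (Finset.mem_insert_self _ _)
    obtain ⟨l₁, g1, g2, g3, g4, g5, g6⟩ := reachIn_exists_path (h.reachIn hc hxC)
    obtain ⟨l₂, f1, f2, f3, f4, f5, f6⟩ := reachIn_exists_path (h.reachIn hxC hc)
    obtain ⟨w1, w2, w3, w4⟩ := walk_glue g3 f3 g5 f4
    refine ⟨K ∪ {y | y ∈ l₁ ++ l₂.tail}, ?_, h2.union (List.finite_toSet _), ?_, ?_⟩
    · rintro y (hy | hy)
      · exact h1 hy
      · rcases w4 y hy with hy | hy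
        · exact g6 y hy
        · exact f6 y hy
    · exact h3.extend w1 ⟨c, by rw [w2, g4], h3.1⟩ ⟨c, by rw [w3, f5], h3.1⟩
    · intro W hW
      rcases Finset.mem_insert.1 hW with rfl | hW
      · refine ⟨x, Or.inr ?_, hxU⟩
        exact List.mem_append.2 (Or.inl (mem_of_getLast?_eq g5))
      · obtain ⟨y, hy1, hy2⟩ := h4 W hW
        exact ⟨y, Or.inl hy1, hy2⟩

end Aux2

section Step

variable {D : V → V → Prop} {𝒰 : Finset (Set V)} {f : Finset V → Set V}

theorem mem_dropLast_of_mem_tail_dropLast {l : List V} {x : V}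
    (h : x ∈ l.tail.dropLast) : x ∈ l.dropLast := by
  rcases l with _ | ⟨a, t⟩
  · simp at h
  · simp only [List.tail_cons] at h
    rcases t with _ | ⟨b, t'⟩
    · simp at h
    · rw [List.dropLast_cons_of_ne_nil (by simp)]
      exact List.mem_cons_of_mem _ h

theorem mem_tail_of_mem_tail_dropLast {l : List V} {x : V}
    (h : x ∈ l.tail.dropLast) : x ∈ l.tail :=
  List.dropLast_sublist _ |>.subset h

theorem step_lemma (hf : IsVertexDirection D f)
    (hcl : ∀ X : Finset V, ∀ U ∈ 𝒰, (f X ∩ U).Nonempty)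
    (X : Finset V) (K : Set V) (c : V)
    (hKC : K ⊆ f X) (hKfin : K.Finite) (hKcen : Centered D K c)
    (hKU : ∀ U ∈ 𝒰, (K ∩ U).Nonempty) :
    ∃ (X' : Finset V) (K' : Set V) (c' : V) (B : Set V) (fw bw : List V),
      X ⊆ X' ∧ K' ⊆ f X' ∧ K'.Finite ∧ Centered D K' c' ∧ (∀ U ∈ 𝒰, (K' ∩ U).Nonempty) ∧
      K ⊆ B ∧ B ⊆ f X ∧ (∀ x ∈ B, x ∉ f X') ∧ B.Finite ∧ Centered D B c ∧
      IsPathList D fw ∧ IsPathList D bw ∧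
      (∃ a, fw.head? = some a ∧ a ∈ B) ∧ (∃ b, fw.getLast? = some b ∧ b ∈ K') ∧
      (∃ a, bw.head? = some a ∧ a ∈ K') ∧ (∃ b, bw.getLast? = some b ∧ b ∈ B) ∧
      (∀ x ∈ fw.tail.dropLast, x ∈ f X ∧ x ∉ f X' ∧ x ∉ B) ∧
      (∀ x ∈ bw.tail.dropLast, x ∈ f X ∧ x ∉ f X' ∧ x ∉ B) ∧
      (∀ x ∈ fw.tail.dropLast, x ∉ bw.tail.dropLast) := by
  classical
  set X' := X ∪ hKfin.toFinset with hX'def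
  have hXX' : X ⊆ X' := Finset.subset_union_left
  have hsub : f X' ⊆ f X := hf.2 X X' hXX'
  have hC'scc := hf.1 X'
  have hCscc := hf.1 X
  have hC'K : ∀ x ∈ f X', x ∉ K := by
    intro x hx hxK
    apply hC'scc.subsetS hx
    simp only [hX'def, Finset.coe_union, Set.mem_union]
    exact Or.inr (by simpa [hKfin.mem_toFinset] using hxK)
  -- the new hull inside f X'
  obtain ⟨K₀, c', hK₀C', hK₀fin, hK₀cen, hK₀U⟩ := exists_hull hC'scc (hcl X')
  have hcC : c ∈ f X := hKC hKcen.1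
  have hc'C' : c' ∈ f X' := hK₀C' hK₀cen.1
  have hc'C : c' ∈ f X := hsub hc'C'
  -- raw forward path from c to c' inside f X
  obtain ⟨p0, p0ne, p0nd, p0ch, p0h, p0l, p0mem⟩ := reachIn_exists_path (hCscc.reachIn hcC hc'C)
  -- last exit from K
  obtain ⟨p1, hp1suf, hp1ne, hp1last, ⟨u₀, hu₀h, hu₀K⟩, hp1tail⟩ := trim_last K p0 c p0h hKcen.1
  -- first entry into f X'
  obtain ⟨p2, hp2pre, hp2ne, hp2h, ⟨u, hul, huC'⟩, hp2drop⟩ :=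
    trim_first (f X') p1 c' (hp1last.trans p0l) hc'C'
  have p2inf : p2 <:+: p0 := by
    obtain ⟨t, ht⟩ := hp1suf
    obtain ⟨s, hs⟩ := hp2pre
    exact ⟨t, s, by rw [← ht, ← hs, List.append_assoc]⟩
  have p2ch : p2.Chain' D := p0ch.infix p2inf
  have p2nd : p2.Nodup := List.Nodup.sublist p2inf.sublist p0nd
  have p2mem : ∀ x ∈ p2, x ∈ f X := fun x hx => p0mem x (p2inf.subset hx)
  have p2head : p2.head? = some u₀ := hp2h.trans hu₀h
  have p2tailK : ∀ x ∈ p2.tail, x ∉ K := by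
    obtain ⟨s, hs⟩ := hp2pre
    intro x hx
    apply hp1tail
    rw [← hs, List.tail_append_of_ne_nil hp2ne]
    exact List.mem_append.2 (Or.inl hx)
  -- raw backward path from c' to c inside f X
  obtain ⟨q0, q0ne, q0nd, q0ch, q0h, q0l, q0mem⟩ := reachIn_exists_path (hCscc.reachIn hc'C hcC)
  -- last exit from f X'
  obtain ⟨q1, hq1suf, hq1ne, hq1last, ⟨v, hvh, hvC'⟩, hq1tail⟩ :=
    trim_last (f X') q0 c' q0h hc'C'
  -- first entry into K
  obtain ⟨q2, hq2pre, hq2ne, hq2h, ⟨w, hwl, hwK⟩, hq2drop⟩ :=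
    trim_first K q1 c (hq1last.trans q0l) hKcen.1
  have q2inf : q2 <:+: q0 := by
    obtain ⟨t, ht⟩ := hq1suf
    obtain ⟨s, hs⟩ := hq2pre
    exact ⟨t, s, by rw [← ht, ← hs, List.append_assoc]⟩
  have q2ch : q2.Chain' D := q0ch.infix q2inf
  have q2nd : q2.Nodup := List.Nodup.sublist q2inf.sublist q0nd
  have q2mem : ∀ x ∈ q2, x ∈ f X := fun x hx => q0mem x (q2inf.subset hx)
  have q2head : q2.head? = some v := hq2h.trans hvh
  have q2tailC' : ∀ x ∈ q2.tail, x ∉ f X' := by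
    obtain ⟨s, hs⟩ := hq2pre
    intro x hx
    apply hq1tail
    rw [← hs, List.tail_append_of_ne_nil hq2ne]
    exact List.mem_append.2 (Or.inl hx)
  -- the interior of the trimmed backward path
  set intQ : Set V := {x | x ∈ q2.tail.dropLast} with hintQ
  -- trim the forward path from its last exit from K ∪ intQ
  obtain ⟨fw, hfwsuf, hfwne, hfwlast, ⟨xs, hxsh, hxsT⟩, hfwtail⟩ :=
    trim_last (K ∪ intQ) p2 u₀ p2head (Or.inl hu₀K)
  have fwch : fw.Chain' D := p2ch.suffix hfwsuf
  have fwnd : fw.Nodup := List.Nodup.sublist hfwsuf.sublist p2nd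
  have fwlast : fw.getLast? = some u := hfwlast.trans hul
  have fwmem : ∀ x ∈ fw, x ∈ f X := fun x hx => p2mem x (hfwsuf.subset hx)
  have fwdropC' : ∀ x ∈ fw.dropLast, x ∉ f X' := by
    obtain ⟨t, ht⟩ := hfwsuf
    intro x hx
    apply hp2drop
    rw [← ht, List.dropLast_append_of_ne_nil hfwne]
    exact List.mem_append.2 (Or.inr hx)
  -- closed walks within f X' joining c' to u and to v, producing the final hull K'
  obtain ⟨lu1, a1, a2, a3, a4, a5, a6⟩ := reachIn_exists_path (hC'scc.reachIn hc'C' huC')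
  obtain ⟨lu2, b1, b2, b3, b4, b5, b6⟩ := reachIn_exists_path (hC'scc.reachIn huC' hc'C')
  obtain ⟨lv1, d1, d2, d3, d4, d5, d6⟩ := reachIn_exists_path (hC'scc.reachIn hc'C' hvC')
  obtain ⟨lv2, e1, e2, e3, e4, e5, e6⟩ := reachIn_exists_path (hC'scc.reachIn hvC' hc'C')
  obtain ⟨wu1, wu2, wu3, wu4⟩ := walk_glue a3 b3 a5 b4
  obtain ⟨wv1, wv2, wv3, wv4⟩ := walk_glue d3 e3 d5 e4
  set K' : Set V := (K₀ ∪ {y | y ∈ lu1 ++ lu2.tail}) ∪ {y | y ∈ lv1 ++ lv2.tail} with hK'def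
  have hK'C' : K' ⊆ f X' := by
    rintro y ((hy | hy) | hy)
    · exact hK₀C' hy
    · rcases wu4 y hy with h | h
      · exact a6 y h
      · exact b6 y h
    · rcases wv4 y hy with h | h
      · exact d6 y h
      · exact e6 y h
  have hK'fin : K'.Finite :=
    ((hK₀fin.union (List.finite_toSet _)).union (List.finite_toSet _))
  have hK'cen : Centered D K' c' := by
    refine Centered.extend ?_ wv1 ⟨c', by rw [wv2, d4], ?_⟩ ⟨c', by rw [wv3, e5], ?_⟩
    · exact hK₀cen.extend wu1 ⟨c', by rw [wu2, a4], hK₀cen.1⟩ ⟨c', by rw [wu3, b5], hK₀cen.1⟩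
    · exact Or.inl hK₀cen.1
    · exact Or.inl hK₀cen.1
  have hK'U : ∀ U ∈ 𝒰, (K' ∩ U).Nonempty := by
    intro U hU
    obtain ⟨y, hy1, hy2⟩ := hK₀U U hU
    exact ⟨y, Or.inl (Or.inl hy1), hy2⟩
  have huK' : u ∈ K' := by
    refine Or.inl (Or.inr ?_)
    exact List.mem_append.2 (Or.inl (mem_of_getLast?_eq a5))
  have hvK' : v ∈ K' := by
    refine Or.inr ?_
    exact List.mem_append.2 (Or.inl (mem_of_getLast?_eq d5))
  -- properties of fw interior
  have fwintfX : ∀ x ∈ fw.tail.dropLast, x ∈ f X ∧ x ∉ f X' := fun x hx =>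
    ⟨fwmem x (mem_tail_of_mem_tail_dropLast hx |> List.mem_of_mem_tail),
     fwdropC' x (mem_dropLast_of_mem_tail_dropLast hx)⟩
  -- Now two cases according to where xs lies.
  by_cases hxsK : xs ∈ K
  · -- Case A : B = K, bw = q2
    refine ⟨X', K', c', K, fw, q2, hXX', hK'C', hK'fin, hK'cen, hK'U, subset_rfl, hKC,
      fun x hx hx' => hC'K x hx' hx, hKfin, hKcen, ⟨hfwne, fwnd, fwch⟩, ⟨hq2ne, q2nd, q2ch⟩,
      ⟨xs, hxsh, hxsK⟩, ⟨u, fwlast, huK'⟩, ⟨v, q2head, hvK'⟩, ⟨w, hwl, hwK⟩, ?_, ?_, ?_⟩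
    · intro x hx
      refine ⟨(fwintfX x hx).1, (fwintfX x hx).2, ?_⟩
      intro hxK
      exact hfwtail x (mem_tail_of_mem_tail_dropLast hx) (Or.inl hxK)
    · intro x hx
      refine ⟨q2mem x (mem_tail_of_mem_tail_dropLast hx |> List.mem_of_mem_tail),
        q2tailC' x (mem_tail_of_mem_tail_dropLast hx), ?_⟩
      exact hq2drop x (mem_dropLast_of_mem_tail_dropLast hx)
    · intro x hx hx'
      exact hfwtail x (mem_tail_of_mem_tail_dropLast hx) (Or.inr hx')
  · have hxsQ : xs ∈ intQ := hxsT.resolve_left hxsK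
    -- decompose q2 = (v :: d₁) ++ xs :: m₂  with m₂ ending at w
    obtain ⟨q2h, q2t, rfl⟩ := List.exists_cons_of_ne_nil hq2ne
    have hq2tne : q2t ≠ [] := by
      rintro rfl
      simp [hintQ] at hxsQ
    have hxsdrop : xs ∈ q2t.dropLast := by simpa [hintQ] using hxsQ
    obtain ⟨d₁, d₂, hd⟩ := List.append_of_mem hxsdrop
    have hq2t : q2t = d₁ ++ xs :: (d₂ ++ [q2t.getLast hq2tne]) := by
      conv_lhs => rw [← List.dropLast_append_getLast hq2tne, hd]
      simp
    set m₂ : List V := d₂ ++ [q2t.getLast hq2tne] with hm₂def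
    have hwq2t : q2t.getLast hq2tne = w := by
      have : (q2h :: q2t).getLast? = some (q2t.getLast hq2tne) := by
        rw [List.getLast?_eq_getLast_of_ne_nil (by simp)]
        simp [List.getLast_cons hq2tne]
      rw [this] at hwl
      exact (Option.some.injEq _ _ ▸ hwl : _)
    -- decompose p2 = pl ++ xs :: fwt
    obtain ⟨pl, hpl⟩ := hfwsuf
    obtain ⟨xs', fwt, rfl⟩ := List.exists_cons_of_ne_nil hfwne
    have hxs' : xs' = xs := by simpa using hxsh
    subst hxs'
    rename' xs' => xs
    have hplne : pl ≠ [] := by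
      intro h
      rw [h, List.nil_append] at hpl
      rw [← hpl] at p2head
      simp only [List.head?_cons, Option.some.injEq] at p2head
      exact hxsK (p2head ▸ hu₀K)
    have hfwtne : fwt ≠ [] := by
      intro h
      subst h
      have : xs = u := by simpa using fwlast
      subst this
      exact q2tailC' xs (mem_tail_of_mem_tail_dropLast (by simpa [hintQ] using hxsQ)) huC'
    -- the absorbing walk
    set wB : List V := (pl ++ [xs]) ++ m₂ with hwBdef
    have hq2full : q2h :: q2t = (q2h :: d₁) ++ xs :: m₂ := by
      rw [List.cons_append, ← hq2t]
    have hxm₂suf : xs :: m₂ <:+ q2h :: q2t := ⟨q2h :: d₁, hq2full.symm⟩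
    have hxm₂ch : (xs :: m₂).Chain' D := q2ch.suffix hxm₂suf
    have hwBch : wB.Chain' D := by
      refine List.isChain_append.2 ⟨p2ch.prefix ⟨fwt, by rw [← hpl]; simp⟩,
        (List.isChain_cons.1 hxm₂ch).2, ?_⟩
      intro x hx y hy
      rw [List.getLast?_concat] at hx
      simp only [Option.mem_def, Option.some.injEq] at hx
      subst hx
      exact (List.isChain_cons.1 hxm₂ch).1 y hy
    have hwBhead : wB.head? = some u₀ := by
      rw [hwBdef, List.head?_append_of_ne_nil _ (by simp [hplne]),
        List.head?_append_of_ne_nil _ hplne]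
      rw [← List.head?_append_of_ne_nil pl (l₂ := xs :: fwt) hplne, hpl]
      exact p2head
    have hwBlast : wB.getLast? = some w := by
      rw [hwBdef, List.getLast?_append_of_ne_nil _ (by simp [hm₂def]), hm₂def,
        List.getLast?_concat, hwq2t]
    -- the enlarged bead
    set B : Set V := K ∪ {y | y ∈ wB} with hBdef
    have hKB : K ⊆ B := Set.subset_union_left
    have hBcen : Centered D B c := hKcen.extend hwBch ⟨u₀, hwBhead, hu₀K⟩ ⟨w, hwBlast, hwK⟩
    have hwBmem : ∀ y ∈ wB, y ∈ (q2h :: q2t) ∨ y ∈ p2 := by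
      intro y hy
      rcases List.mem_append.1 hy with hy | hy
      · refine Or.inr ?_
        rw [← hpl]
        rcases List.mem_append.1 hy with hy | hy
        · exact List.mem_append.2 (Or.inl hy)
        · simp only [List.mem_singleton] at hy
          subst hy
          exact List.mem_append.2 (Or.inr (by simp))
      · exact Or.inl (hq2full ▸ List.mem_append.2 (Or.inr (List.mem_cons_of_mem _ hy)))
    have hBfX : B ⊆ f X := by
      rintro y (hy | hy)
      · exact hKC hy
      · rcases hwBmem y hy with h | h
        · exact q2mem y h
        · exact p2mem y h
    -- B avoids f X'
    have hplxs_drop : ∀ y ∈ pl ++ [xs], y ∈ p2.dropLast := by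
      intro y hy
      rw [← hpl, List.dropLast_append_of_ne_nil (List.cons_ne_nil _ _),
        List.dropLast_cons_of_ne_nil hfwtne]
      rcases List.mem_append.1 hy with hy | hy
      · exact List.mem_append.2 (Or.inl hy)
      · simp only [List.mem_singleton] at hy
        subst hy
        exact List.mem_append.2 (Or.inr (by simp))
    have hBC' : ∀ x ∈ B, x ∉ f X' := by
      rintro y (hy | hy)
      · exact fun h => hC'K y h hy
      · rcases List.mem_append.1 hy with hy | hy
        · exact hp2drop y (hplxs_drop y hy)
        · refine q2tailC' y ?_
          rw [hq2full, List.tail_append_of_ne_nil (by simp)]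
          simp only [List.tail_cons]
          exact List.mem_append.2 (Or.inr (List.mem_cons_of_mem _ hy))
    have hBfin : B.Finite := hKfin.union (List.finite_toSet _)
    -- fw-tail avoids B
    have hfwtB : ∀ x ∈ fwt, x ∉ B := by
      intro x hx
      rintro (hxB | hxB)
      · exact hfwtail x (by simpa using hx) (Or.inl hxB)
      · rcases List.mem_append.1 hxB with h | h
        · -- x in pl ++ [xs] : contradicts nodup of p2
          have hnd := p2nd
          rw [← hpl] at hnd
          rcases List.mem_append.1 h with h | h
          · exact (List.nodup_append.1 hnd).2.2 x h x (List.mem_cons_of_mem _ hx) rfl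
          · simp only [List.mem_singleton] at h
            subst h
            exact (List.nodup_cons.1 (List.nodup_append.1 hnd).2.1).1 hx
        · -- x in m₂ = d₂ ++ [w]
          rcases List.mem_append.1 h with h | h
          · refine hfwtail x (by simpa using hx) (Or.inr ?_)
            simp only [hintQ, List.tail_cons, Set.mem_setOf_eq]
            rw [hd]
            exact List.mem_append.2 (Or.inr (List.mem_cons_of_mem _ h))
          · simp only [List.mem_singleton] at h
            subst h
            exact hfwtail _ (by simpa using hx) (Or.inl (hwq2t ▸ hwK))
    -- define bw by trimming q2 to its first entry into B
    obtain ⟨bw, hbwpre, hbwne, hbwh, ⟨yb, hybl, hybB⟩, hbwdrop⟩ :=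
      trim_first B (q2h :: q2t) w hwl (hKB hwK)
    have bwinf : bw <:+: q2h :: q2t := hbwpre.isInfix
    have bwch : bw.Chain' D := q2ch.infix bwinf
    have bwnd : bw.Nodup := List.Nodup.sublist bwinf.sublist q2nd
    have bwhead : bw.head? = some v := hbwh.trans q2head
    have bwtail : ∀ x ∈ bw.tail, x ∈ (q2h :: q2t).tail := by
      obtain ⟨s, hs⟩ := hbwpre
      intro x hx
      rw [← hs, List.tail_append_of_ne_nil hbwne]
      exact List.mem_append.2 (Or.inl hx)
    have bwintQ : ∀ x ∈ bw.tail.dropLast, x ∈ intQ := by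
      intro x hx
      have hx1 : x ∈ (q2h :: q2t).tail := bwtail x (mem_tail_of_mem_tail_dropLast hx)
      have hx2 : x ∉ B := hbwdrop x (mem_dropLast_of_mem_tail_dropLast hx)
      simp only [List.tail_cons] at hx1
      simp only [hintQ, List.tail_cons, Set.mem_setOf_eq]
      rw [← List.dropLast_append_getLast hq2tne] at hx1
      rcases List.mem_append.1 hx1 with h | h
      · exact h
      · simp only [List.mem_singleton] at h
        subst h
        exact absurd (hKB (hwq2t ▸ hwK)) hx2
    refine ⟨X', K', c', B, xs :: fwt, bw, hXX', hK'C', hK'fin, hK'cen, hK'U, hKB, hBfX,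
      hBC', hBfin, hBcen, ⟨by simp, fwnd, fwch⟩, ⟨hbwne, bwnd, bwch⟩,
      ⟨xs, rfl, Or.inr (List.mem_append.2 (Or.inl (by simp)))⟩,
      ⟨u, fwlast, huK'⟩, ⟨v, bwhead, hvK'⟩, ⟨yb, hybl, hybB⟩, ?_, ?_, ?_⟩
    · intro x hx
      refine ⟨(fwintfX x hx).1, (fwintfX x hx).2, ?_⟩
      exact hfwtB x ((List.dropLast_sublist fwt).subset (by simpa using hx))
    · intro x hx
      have hxQ := bwintQ x hx
      have hxt : x ∈ q2t := (List.dropLast_sublist q2t).subset (by simpa [hintQ] using hxQ)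
      exact ⟨q2mem x (List.mem_cons_of_mem _ hxt), q2tailC' x (by simpa using hxt),
        hbwdrop x (mem_dropLast_of_mem_tail_dropLast hx)⟩
    · intro x hx hx'
      have hxQ := bwintQ x hx'
      refine hfwtail x ?_ (Or.inr hxQ)
      simpa using (List.dropLast_sublist fwt).subset (by simpa using hx)

end Step

section Assemble

variable {D : V → V → Prop} {𝒰 : Finset (Set V)} {f : Finset V → Set V}

theorem direction_to_necklace (hf : IsVertexDirection D f)
    (hcl : ∀ X : Finset V, ∀ U ∈ 𝒰, (f X ∩ U).Nonempty) :
    ∃ N : Necklace D, N.AttachedTo 𝒰 := by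
  classical
  have hstep : ∀ s : {s : Finset V × Set V × V // s.2.1 ⊆ f s.1 ∧ s.2.1.Finite ∧
      Centered D s.2.1 s.2.2 ∧ ∀ U ∈ 𝒰, (s.2.1 ∩ U).Nonempty},
      ∃ t : {s : Finset V × Set V × V // s.2.1 ⊆ f s.1 ∧ s.2.1.Finite ∧
        Centered D s.2.1 s.2.2 ∧ ∀ U ∈ 𝒰, (s.2.1 ∩ U).Nonempty},
      ∃ (B : Set V) (fw bw : List V),
      s.val.1 ⊆ t.val.1 ∧
      s.val.2.1 ⊆ B ∧ B ⊆ f s.val.1 ∧ (∀ x ∈ B, x ∉ f t.val.1) ∧ B.Finite ∧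
      Centered D B s.val.2.2 ∧
      IsPathList D fw ∧ IsPathList D bw ∧
      (∃ a, fw.head? = some a ∧ a ∈ B) ∧ (∃ b, fw.getLast? = some b ∧ b ∈ t.val.2.1) ∧
      (∃ a, bw.head? = some a ∧ a ∈ t.val.2.1) ∧ (∃ b, bw.getLast? = some b ∧ b ∈ B) ∧
      (∀ x ∈ fw.tail.dropLast, x ∈ f s.val.1 ∧ x ∉ f t.val.1 ∧ x ∉ B) ∧
      (∀ x ∈ bw.tail.dropLast, x ∈ f s.val.1 ∧ x ∉ f t.val.1 ∧ x ∉ B) ∧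
      (∀ x ∈ fw.tail.dropLast, x ∉ bw.tail.dropLast) := by
    rintro ⟨⟨X, K, c⟩, hKC, hfin, hcen, hU⟩
    obtain ⟨X', K', c', B, fw, bw, g1, g2, g3, g4, g5, g6, g7, g8, g9, g10, g11, g12,
      g13, g14, g15, g16, g17, g18, g19⟩ := step_lemma hf hcl X K c hKC hfin hcen hU
    exact ⟨⟨(X', K', c'), g2, g3, g4, g5⟩, B, fw, bw, g1, g6, g7, g8, g9, g10, g11, g12,
      g13, g14, g15, g16, g17, g18, g19⟩
  choose nxt Bd fwd bwd hXsub hKB hBC hBC' hBfin hBcen hfwP hbwP hfwh hfwl hbwh hbwl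
    hfwint hbwint hfb using hstep
  obtain ⟨K₀, c₀, e1, e2, e3, e4⟩ := exists_hull (hf.1 ∅) (hcl ∅)
  obtain ⟨g, hg0, hgs⟩ : ∃ g : ℕ → {s : Finset V × Set V × V // s.2.1 ⊆ f s.1 ∧
      s.2.1.Finite ∧ Centered D s.2.1 s.2.2 ∧ ∀ U ∈ 𝒰, (s.2.1 ∩ U).Nonempty},
      g 0 = ⟨(∅, K₀, c₀), e1, e2, e3, e4⟩ ∧ ∀ n, g (n+1) = nxt (g n) :=
    ⟨fun n => Nat.rec ⟨(∅, K₀, c₀), e1, e2, e3, e4⟩ (fun _ s => nxt s) n, rfl, fun _ => rfl⟩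
  -- monotonicity of the X-component
  have hXmono : ∀ m n, m ≤ n → (g m).val.1 ⊆ (g n).val.1 := by
    intro m n hmn
    induction n, hmn using Nat.le_induction with
    | base => exact subset_rfl
    | succ n hmn ih => exact ih.trans (by rw [hgs n]; exact hXsub (g n))
  have hfmono : ∀ m n, m ≤ n → f (g n).val.1 ⊆ f (g m).val.1 :=
    fun m n hmn => hf.2 _ _ (hXmono m n hmn)
  -- the beads
  have hbead_sub : ∀ n, Bd (g n) ⊆ f (g n).val.1 := fun n => hBC (g n)
  have hbead_out : ∀ n, ∀ x ∈ Bd (g n), x ∉ f (g (n+1)).val.1 := by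
    intro n x hx
    rw [hgs n]
    exact hBC' (g n) x hx
  have hbead_mem_ann : ∀ m n, m < n → ∀ x ∈ Bd (g n), x ∉ Bd (g m) := by
    intro m n hmn x hx hx'
    exact hbead_out m x hx' (hfmono (m+1) n hmn (hbead_sub n hx))
  have hint_ann : ∀ n x, x ∈ f (g n).val.1 → x ∉ f (g (n+1)).val.1 →
      ∀ m, m ≠ n → x ∉ f (g m).val.1 ∨ x ∈ f (g (m+1)).val.1 := by
    intro n x hx1 hx2 m hmn
    rcases lt_or_gt_of_ne hmn with h | h
    · exact Or.inr (hfmono (m+1) n h hx1)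
    · exact Or.inl fun hc => hx2 (hfmono (n+1) m h hc)
  -- interior annulus facts
  have hfw_ann : ∀ n x, x ∈ (fwd (g n)).tail.dropLast →
      x ∈ f (g n).val.1 ∧ x ∉ f (g (n+1)).val.1 ∧ x ∉ Bd (g n) := by
    intro n x hx
    have := hfwint (g n) x hx
    exact ⟨this.1, by rw [← hgs n] at this; exact this.2.1, this.2.2⟩
  have hbw_ann : ∀ n x, x ∈ (bwd (g n)).tail.dropLast →
      x ∈ f (g n).val.1 ∧ x ∉ f (g (n+1)).val.1 ∧ x ∉ Bd (g n) := by
    intro n x hx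
    have := hbwint (g n) x hx
    exact ⟨this.1, by rw [← hgs n] at this; exact this.2.1, this.2.2⟩
  have hann_disj : ∀ m n : ℕ, m ≠ n → ∀ x,
      x ∈ f (g m).val.1 → x ∉ f (g (m+1)).val.1 →
      x ∈ f (g n).val.1 → x ∉ f (g (n+1)).val.1 → False := by
    intro m n hmn x h1 h2 h3 h4
    rcases lt_or_gt_of_ne hmn with h | h
    · exact h2 (hfmono (m+1) n h h3)
    · exact h4 (hfmono (n+1) m h h1)
  have hint_not_bead : ∀ n x, x ∈ f (g n).val.1 → x ∉ f (g (n+1)).val.1 →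
      x ∉ Bd (g n) → ∀ m, x ∉ Bd (g m) := by
    intro n x h1 h2 h3 m hm
    rcases Nat.lt_trichotomy m n with h | rfl | h
    · exact hbead_out m x hm (hfmono (m+1) n h h1)
    · exact h3 hm
    · exact h2 (hfmono (n+1) m h (hbead_sub m hm))
  -- next-state hull is inside the next bead
  have hull_in_bead : ∀ n, (g (n+1)).val.2.1 ⊆ Bd (g (n+1)) := fun n => hKB (g (n+1))
  refine ⟨⟨fun n => Bd (g n), fun n => fwd (g n), fun n => bwd (g n),
    fun n => hBfin (g n), fun n => ⟨_, (hBcen (g n)).1⟩, ?_, ?_, fun n => hfwP (g n),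
    fun n => hbwP (g n), ?_, ?_, ?_, ?_, ?_, ?_, ?_, ?_, ?_⟩, ?_⟩
  · -- bead_disj
    intro m n hmn
    rw [Set.disjoint_left]
    intro x hxm hxn
    rcases lt_or_gt_of_ne hmn with h | h
    · exact hbead_mem_ann m n h x hxn hxm
    · exact hbead_mem_ann n m h x hxm hxn
  · -- bead_strong
    intro n a ha b hb
    exact (hBcen (g n)).reach ha hb
  · -- fwd_head
    intro n a ha
    obtain ⟨a', ha1, ha2⟩ := hfwh (g n)
    rw [ha1] at ha
    exact (Option.some_inj.mp ha) ▸ ha2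
  · -- fwd_last
    intro n b hb
    obtain ⟨b', hb1, hb2⟩ := hfwl (g n)
    rw [hb1] at hb
    have hbb : b' = b := Option.some_inj.mp hb
    exact hbb ▸ (hKB (g (n+1)) (show b' ∈ (g (n+1)).val.2.1 by rw [hgs n]; exact hb2))
  · -- bwd_head
    intro n a ha
    obtain ⟨a', ha1, ha2⟩ := hbwh (g n)
    rw [ha1] at ha
    have haa : a' = a := Option.some_inj.mp ha
    exact haa ▸ (hKB (g (n+1)) (show a' ∈ (g (n+1)).val.2.1 by rw [hgs n]; exact ha2))
  · -- bwd_last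
    intro n b hb
    obtain ⟨b', hb1, hb2⟩ := hbwl (g n)
    rw [hb1] at hb
    exact (Option.some_inj.mp hb) ▸ hb2
  · -- fwd_inner
    intro n x hx m
    obtain ⟨h1, h2, h3⟩ := hfw_ann n x hx
    exact hint_not_bead n x h1 h2 h3 m
  · -- bwd_inner
    intro n x hx m
    obtain ⟨h1, h2, h3⟩ := hbw_ann n x hx
    exact hint_not_bead n x h1 h2 h3 m
  · -- fwd_fwd_disj
    intro m n hmn x hxm hxn
    obtain ⟨a1, a2, _⟩ := hfw_ann m x hxm
    obtain ⟨b1, b2, _⟩ := hfw_ann n x hxn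
    exact hann_disj m n hmn x a1 a2 b1 b2
  · -- bwd_bwd_disj
    intro m n hmn x hxm hxn
    obtain ⟨a1, a2, _⟩ := hbw_ann m x hxm
    obtain ⟨b1, b2, _⟩ := hbw_ann n x hxn
    exact hann_disj m n hmn x a1 a2 b1 b2
  · -- fwd_bwd_disj
    intro m n x hxm hxn
    by_cases hmn : m = n
    · subst hmn
      exact hfb (g m) x hxm hxn
    · obtain ⟨a1, a2, _⟩ := hfw_ann m x hxm
      obtain ⟨b1, b2, _⟩ := hbw_ann n x hxn
      exact hann_disj m n hmn x a1 a2 b1 b2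
  · -- attached
    have : {n : ℕ | ∀ U ∈ 𝒰, ((Bd (g n)) ∩ U).Nonempty} = Set.univ := by
      refine Set.eq_univ_of_forall ?_
      intro n U hU
      obtain ⟨y, hy1, hy2⟩ := (g n).prop.2.2.2 U hU
      exact ⟨y, hKB (g n) hy1, hy2⟩
    rw [Necklace.AttachedTo]
    simp only []
    rw [this]
    exact Set.infinite_univ

end Assemble

section Blocks

variable {D : V → V → Prop}

theorem ray_of_blocks (D : V → V → Prop) (B : ℕ → List V) (hne : ∀ n, B n ≠ [])
    (hch : ∀ n, (B n).Chain' D) (hnd : ∀ n, (B n).Nodup)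
    (hdisj : ∀ m n, m ≠ n → ∀ x ∈ B m, x ∉ B n)
    (hlink : ∀ n, ∀ x ∈ (B n).getLast?, ∀ y ∈ (B (n+1)).head?, D x y) :
    ∃ R : ℕ → V, IsRay D R ∧ ∀ n, ∃ k, ∀ j, k ≤ j → ∃ m, n ≤ m ∧ R j ∈ B m := by
  classical
  obtain ⟨acc, hacc0, haccS⟩ : ∃ acc : ℕ → ℕ, acc 0 = 0 ∧
      ∀ n, acc (n+1) = acc n + (B n).length :=
    ⟨fun n => Nat.rec 0 (fun m a => a + (B m).length) n, rfl, fun _ => rfl⟩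
  have hlen : ∀ n, 0 < (B n).length := fun n => List.length_pos_iff.2 (hne n)
  have haccmono : ∀ m n, m ≤ n → acc m ≤ acc n := by
    intro m n h
    induction n, h using Nat.le_induction with
    | base => exact le_rfl
    | succ n h ih => rw [haccS]; omega
  have haccge : ∀ n, n ≤ acc n := by
    intro n
    induction n with
    | zero => omega
    | succ n ih => have := hlen n; rw [haccS]; omega
  have hrepk : ∀ k, ∃ n, acc n ≤ k ∧ k < acc (n+1) := by
    intro k
    refine ⟨Nat.findGreatest (fun n => acc n ≤ k) k,
      Nat.findGreatest_spec (P := fun n => acc n ≤ k) (m := 0) (Nat.zero_le k)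
        (by show acc 0 ≤ k; rw [hacc0]; exact Nat.zero_le k), ?_⟩
    by_cases h : Nat.findGreatest (fun n => acc n ≤ k) k + 1 ≤ k
    · by_contra hc
      push_neg at hc
      exact Nat.findGreatest_is_greatest (Nat.lt_succ_self _) h hc
    · push_neg at h
      have := haccge (Nat.findGreatest (fun n => acc n ≤ k) k + 1)
      omega
  have huniq : ∀ k n n', acc n ≤ k → k < acc (n+1) → acc n' ≤ k → k < acc (n'+1) → n = n' := by
    intro k n n' h1 h2 h3 h4
    by_contra hne'
    rcases lt_or_gt_of_ne hne' with h | h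
    · have := haccmono (n+1) n' h
      omega
    · have := haccmono (n'+1) n h
      omega
  choose nf hnf1 hnf2 using hrepk
  set v₀ := (B 0).head (hne 0) with hv₀
  set R : ℕ → V := fun k => (B (nf k)).getD (k - acc (nf k)) v₀ with hR
  have hnfval : ∀ n i, i < (B n).length → nf (acc n + i) = n := by
    intro n i hi
    refine huniq (acc n + i) _ n (hnf1 _) (hnf2 _) (Nat.le_add_right _ _) ?_
    rw [haccS]; omega
  have hRval : ∀ n i (hi : i < (B n).length), R (acc n + i) = (B n).get ⟨i, hi⟩ := by
    intro n i hi
    rw [hR]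
    simp only
    rw [hnfval n i hi, Nat.add_sub_cancel_left]
    exact (List.getD_eq_getElem _ _ hi).trans (by simp)
  have hrep : ∀ k, ∃ n i, ∃ hi : i < (B n).length, k = acc n + i := by
    intro k
    have h1 := hnf1 k
    have h2 := hnf2 k
    rw [haccS] at h2
    exact ⟨nf k, k - acc (nf k), by omega, by omega⟩
  refine ⟨R, ⟨?_, ?_⟩, ?_⟩
  · -- injective
    intro k k' hkk
    obtain ⟨n, i, hi, rfl⟩ := hrep k
    obtain ⟨n', i', hi', rfl⟩ := hrep k'
    rw [hRval n i hi, hRval n' i' hi'] at hkk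
    have hnn : n = n' := by
      by_contra hne'
      have h6 : (B n).get ⟨i, hi⟩ ∈ B n' := by rw [hkk]; exact List.get_mem _ _
      exact hdisj n n' hne' _ (List.get_mem _ _) h6
    subst hnn
    have h5 : (⟨i, hi⟩ : Fin (B n).length) = ⟨i', hi'⟩ := (hnd n).get_inj_iff.1 hkk
    have : i = i' := by simpa using h5
    omega
  · -- edges
    intro k
    obtain ⟨n, i, hi, rfl⟩ := hrep k
    by_cases hi1 : i + 1 < (B n).length
    · have h1 : R (acc n + i + 1) = (B n).get ⟨i + 1, hi1⟩ := by
        rw [show acc n + i + 1 = acc n + (i + 1) by omega, hRval n (i+1) hi1]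
      rw [hRval n i hi, h1]
      simpa using List.isChain_iff_getElem.1 (hch n) i (by omega)
    · have h2 : acc n + i + 1 = acc (n+1) + 0 := by
        rw [haccS]; omega
      have h3 : R (acc n + i + 1) = (B (n+1)).get ⟨0, hlen (n+1)⟩ := by
        rw [h2, hRval (n+1) 0 (hlen (n+1))]
      rw [hRval n i hi, h3]
      refine hlink n _ ?_ _ ?_
      · rw [List.getLast?_eq_getLast_of_ne_nil (hne n), List.getLast_eq_getElem]
        simp only [Option.mem_def, Option.some.injEq, List.get_eq_getElem]
        congr 1
        omega
      · rw [List.head?_eq_head (hne (n+1))]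
        simp only [Option.mem_def, Option.some.injEq]
        exact (List.get_mk_zero _).symm
  · -- tails
    intro n
    refine ⟨acc n, ?_⟩
    intro j hj
    obtain ⟨m, i, hi, rfl⟩ := hrep j
    have hmn : n ≤ m := by
      by_contra hc
      push_neg at hc
      have := haccmono (m+1) n hc
      rw [haccS] at this
      omega
    refine ⟨m, hmn, ?_⟩
    rw [hRval m i hi]
    exact List.get_mem _ _

end Blocks

section NeckToEnd

variable {D : V → V → Prop} {𝒰 : Finset (Set V)}

theorem head_eq_of_eq_cons {l : List V} {a : V} {t : List V} (heq : l = a :: t)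
    (h : l ≠ []) : l.head h = a := by subst heq; rfl

theorem getLast_not_mem_dropLast {l : List V} (h : l ≠ []) (hnd : l.Nodup) :
    l.getLast h ∉ l.dropLast := by
  have h2 : (l.dropLast ++ [l.getLast h]).Nodup := by
    rw [List.dropLast_append_getLast h]; exact hnd
  intro hx
  exact (List.nodup_append.1 h2).2.2 _ hx _ (by simp) rfl

theorem mem_list_cases {l : List V} (h : l ≠ []) {x : V} (hx : x ∈ l) :
    x = l.head h ∨ x = l.getLast h ∨ x ∈ l.tail.dropLast := by
  obtain ⟨a, t, rfl⟩ := List.exists_cons_of_ne_nil h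
  rcases List.mem_cons.1 hx with rfl | hx
  · exact Or.inl (by simp)
  · have ht : t ≠ [] := by rintro rfl; simp at hx
    rw [← List.dropLast_append_getLast ht] at hx
    rcases List.mem_append.1 hx with hx | hx
    · exact Or.inr (Or.inr (by simpa using hx))
    · simp only [List.mem_singleton] at hx
      subst hx
      exact Or.inr (Or.inl (by rw [List.getLast_cons ht]))

theorem head?_dropLast {l : List V} (h : l.dropLast ≠ []) : l.dropLast.head? = l.head? := by
  rcases l with _ | ⟨a, t⟩
  · simp
  · rcases t with _ | ⟨b, t'⟩
    · simp at h
    · rw [List.dropLast_cons_of_ne_nil (by simp)]; simp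

theorem necklace_to_end (N : Necklace D) (hatt : N.AttachedTo 𝒰) :
    ∃ R, Solid D R ∧ ∀ X : Finset V, ∃ C, IsSCCIn D ((↑X : Set V)ᶜ) C ∧ HasTailIn R C ∧
      ∀ U ∈ 𝒰, (C ∩ U).Nonempty := by
  classical
  have hfne : ∀ n, N.fwd n ≠ [] := fun n => (N.fwd_path n).1
  have hfnd : ∀ n, (N.fwd n).Nodup := fun n => (N.fwd_path n).2.1
  have hfch : ∀ n, (N.fwd n).Chain' D := fun n => (N.fwd_path n).2.2
  have hbne : ∀ n, N.bwd n ≠ [] := fun n => (N.bwd_path n).1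
  have hbch : ∀ n, (N.bwd n).Chain' D := fun n => (N.bwd_path n).2.2
  have hhead : ∀ n, (N.fwd n).head (hfne n) ∈ N.bead n := fun n =>
    N.fwd_head n _ (List.head?_eq_head (hfne n))
  have hlast : ∀ n, (N.fwd n).getLast (hfne n) ∈ N.bead (n+1) := fun n =>
    N.fwd_last n _ (List.getLast?_eq_getLast_of_ne_nil (hfne n))
  have hbhead : ∀ n, (N.bwd n).head (hbne n) ∈ N.bead (n+1) := fun n =>
    N.bwd_head n _ (List.head?_eq_head (hbne n))
  have hblast : ∀ n, (N.bwd n).getLast (hbne n) ∈ N.bead n := fun n =>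
    N.bwd_last n _ (List.getLast?_eq_getLast_of_ne_nil (hbne n))
  have hfdne : ∀ n, (N.fwd n).dropLast ≠ [] := by
    intro n hd
    obtain ⟨a, t, heq⟩ := List.exists_cons_of_ne_nil (hfne n)
    have ht : t = [] := by
      by_contra htne
      rw [heq, List.dropLast_cons_of_ne_nil htne] at hd
      simp at hd
    subst ht
    have h1 : a ∈ N.bead n := N.fwd_head n a (by rw [heq]; rfl)
    have h2 : a ∈ N.bead (n+1) := N.fwd_last n a (by rw [heq]; rfl)
    exact Set.disjoint_left.1 (N.bead_disj n (n+1) (by omega)) h1 h2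
  -- entry vertices
  obtain ⟨e, he0, heS⟩ : ∃ e : ℕ → V, e 0 = (N.fwd 0).head (hfne 0) ∧
      ∀ n, e (n+1) = (N.fwd n).getLast (hfne n) :=
    ⟨fun n => Nat.rec ((N.fwd 0).head (hfne 0)) (fun m _ => (N.fwd m).getLast (hfne m)) n,
      rfl, fun _ => rfl⟩
  have heB : ∀ n, e n ∈ N.bead n := by
    intro n
    cases n with
    | zero => rw [he0]; exact hhead 0
    | succ m => rw [heS m]; exact hlast m
  -- inner connecting paths inside the beads
  have hinner : ∀ n, ∃ l : List V, l ≠ [] ∧ l.Nodup ∧ l.Chain' D ∧ l.head? = some (e n) ∧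
      l.getLast? = some ((N.fwd n).head (hfne n)) ∧ ∀ x ∈ l, x ∈ N.bead n := fun n =>
    reachIn_exists_path (N.bead_strong n _ (heB n) _ (hhead n))
  choose inner i1 i2 i3 i4 i5 i6 using hinner
  have hinner_last : ∀ n, (inner n).getLast (i1 n) = (N.fwd n).head (hfne n) := by
    intro n
    have := i5 n
    rw [List.getLast?_eq_getLast_of_ne_nil (i1 n)] at this
    exact Option.some_inj.mp this
  -- the blocks
  set Bl : ℕ → List V := fun n => (inner n).dropLast ++ (N.fwd n).dropLast with hBl
  have hBlne : ∀ n, Bl n ≠ [] := by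
    intro n h
    rw [hBl] at h
    simp only [List.append_eq_nil_iff] at h
    exact hfdne n h.2
  have hprof : ∀ n x, x ∈ Bl n → x ∈ N.bead n ∨ x ∈ (N.fwd n).tail.dropLast := by
    intro n x hx
    rw [hBl] at hx
    rcases List.mem_append.1 hx with hx | hx
    · exact Or.inl (i6 n x ((List.dropLast_sublist _).subset hx))
    · obtain ⟨a, t, heq⟩ := List.exists_cons_of_ne_nil (hfne n)
      have ht : t ≠ [] := by
        rintro rfl
        rw [heq] at hx
        simp at hx
      rw [heq, List.dropLast_cons_of_ne_nil ht] at hx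
      rcases List.mem_cons.1 hx with rfl | hx
      · exact Or.inl (N.fwd_head n x (by rw [heq]; rfl))
      · refine Or.inr ?_
        rw [heq]
        simpa using hx
  have hBlch : ∀ n, (Bl n).Chain' D := by
    intro n
    rw [hBl]
    refine List.isChain_append.2 ⟨(i3 n).prefix (List.dropLast_prefix _),
      (hfch n).prefix (List.dropLast_prefix _), ?_⟩
    intro x hx y hy
    rw [head?_dropLast (hfdne n), List.head?_eq_head (hfne n)] at hy
    simp only [Option.mem_def, Option.some.injEq] at hy
    subst hy
    -- edge from x (last of inner.dropLast) to head of fwd = last of inner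
    have hsplit : (inner n).dropLast ++ [(inner n).getLast (i1 n)] = inner n :=
      List.dropLast_append_getLast (i1 n)
    have hch2 : ((inner n).dropLast ++ [(inner n).getLast (i1 n)]).Chain' D := by
      rw [hsplit]; exact i3 n
    have := (List.isChain_append.1 hch2).2.2 x hx ((inner n).getLast (i1 n)) (by simp)
    rwa [hinner_last n] at this
  have hBlnd : ∀ n, (Bl n).Nodup := by
    intro n
    rw [hBl]
    refine List.nodup_append.2 ⟨List.Nodup.sublist (List.dropLast_sublist _) (i2 n),
      List.Nodup.sublist (List.dropLast_sublist _) (hfnd n), ?_⟩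
    intro x hx1 y hx2 hxy
    rw [← hxy] at hx2
    -- x ∈ inner.dropLast ⊆ bead n ; x ∈ fwd.dropLast
    obtain ⟨a, t, heq⟩ := List.exists_cons_of_ne_nil (hfne n)
    have ht : t ≠ [] := by
      rintro rfl
      rw [heq] at hx2
      simp at hx2
    rw [heq, List.dropLast_cons_of_ne_nil ht] at hx2
    rcases List.mem_cons.1 hx2 with rfl | hx2
    · -- x = head of fwd = last of inner, cannot be in inner.dropLast
      have hxeq : x = (inner n).getLast (i1 n) := by
        rw [hinner_last n]; exact (head_eq_of_eq_cons heq (hfne n)).symm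
      rw [hxeq] at hx1
      exact getLast_not_mem_dropLast (i1 n) (i2 n) hx1
    · -- x interior of fwd, not in bead n
      have hxint : x ∈ (N.fwd n).tail.dropLast := by rw [heq]; simpa using hx2
      exact N.fwd_inner n x hxint n (i6 n x ((List.dropLast_sublist _).subset hx1))
  have hBldisj : ∀ m n, m ≠ n → ∀ x ∈ Bl m, x ∉ Bl n := by
    intro m n hmn x hxm hxn
    rcases hprof m x hxm with h1 | h1 <;> rcases hprof n x hxn with h2 | h2
    · exact Set.disjoint_left.1 (N.bead_disj m n hmn) h1 h2
    · exact N.fwd_inner n x h2 m h1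
    · exact N.fwd_inner m x h1 n h2
    · exact N.fwd_fwd_disj m n hmn x h1 h2
  have hBllink : ∀ n, ∀ x ∈ (Bl n).getLast?, ∀ y ∈ (Bl (n+1)).head?, D x y := by
    intro n x hx y hy
    -- y = e (n+1)
    have hy' : y = e (n+1) := by
      rw [hBl] at hy
      simp only at hy
      by_cases hc : (inner (n+1)).dropLast = []
      · rw [hc, List.nil_append, head?_dropLast (hfdne (n+1)),
          List.head?_eq_head (hfne (n+1))] at hy
        simp only [Option.mem_def, Option.some.injEq] at hy
        subst hy
        -- inner (n+1) is a singleton : e (n+1) = head of fwd (n+1)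
        obtain ⟨z, tz, heqz⟩ := List.exists_cons_of_ne_nil (i1 (n+1))
        have htz : tz = [] := by
          by_contra htzne
          rw [heqz, List.dropLast_cons_of_ne_nil htzne] at hc
          simp at hc
        have h4 := i4 (n+1)
        have h5 := i5 (n+1)
        rw [heqz, htz] at h4 h5
        simp only [List.head?_cons, Option.some.injEq, List.getLast?_singleton] at h4 h5
        rw [← h4, h5]
      · rw [List.head?_append_of_ne_nil _ hc, head?_dropLast hc, i4 (n+1)] at hy
        simp only [Option.mem_def, Option.some.injEq] at hy
        exact hy.symm
    subst hy'
    -- x = last of fwd.dropLast ; edge to getLast fwd n = e (n+1)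
    rw [hBl] at hx
    simp only at hx
    rw [List.getLast?_append_of_ne_nil _ (hfdne n)] at hx
    have hsplit : (N.fwd n).dropLast ++ [(N.fwd n).getLast (hfne n)] = N.fwd n :=
      List.dropLast_append_getLast (hfne n)
    have hch2 : ((N.fwd n).dropLast ++ [(N.fwd n).getLast (hfne n)]).Chain' D := by
      rw [hsplit]; exact hfch n
    have := (List.isChain_append.1 hch2).2.2 x hx ((N.fwd n).getLast (hfne n)) (by simp)
    rwa [heS n]
  obtain ⟨R, hray, htail⟩ := ray_of_blocks D Bl hBlne hBlch hBlnd hBldisj hBllink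
  -- the main per-X claim
  have main : ∀ X : Finset V, ∃ C, IsSCCIn D ((↑X : Set V)ᶜ) C ∧ HasTailIn R C ∧
      ∀ U ∈ 𝒰, (C ∩ U).Nonempty := by
    intro X
    -- each vertex lies in finitely many of the structures
    have hfinx : ∀ x : V, {n : ℕ | x ∈ N.bead n ∨ x ∈ N.fwd n ∨ x ∈ N.bwd n}.Finite := by
      intro x
      by_cases hx : ∃ m, x ∈ N.bead m
      · obtain ⟨m, hm⟩ := hx
        refine Set.Finite.subset (Set.Finite.insert m
          ((Set.finite_Icc (m-1) m).subset (by
            intro k hk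
            have hk' : k + 1 = m := hk
            simp only [Set.mem_Icc]
            omega))) ?_
        · intro n hn
          have hcase : n = m ∨ n + 1 = m := by
            rcases hn with hn | hn | hn
            · by_contra hc
              push_neg at hc
              exact Set.disjoint_left.1 (N.bead_disj n m hc.1) hn hm
            · rcases mem_list_cases (hfne n) hn with h | h | h
              · left
                by_contra hc
                exact Set.disjoint_left.1 (N.bead_disj n m hc) (h ▸ hhead n) hm
              · right
                by_contra hc
                exact Set.disjoint_left.1 (N.bead_disj (n+1) m hc) (h ▸ hlast n) hm
              · exact absurd hm (N.fwd_inner n x h m)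
            · rcases mem_list_cases (hbne n) hn with h | h | h
              · right
                by_contra hc
                exact Set.disjoint_left.1 (N.bead_disj (n+1) m hc) (h ▸ hbhead n) hm
              · left
                by_contra hc
                exact Set.disjoint_left.1 (N.bead_disj n m hc) (h ▸ hblast n) hm
              · exact absurd hm (N.bwd_inner n x h m)
          rcases hcase with rfl | h
          · exact Set.mem_insert _ _
          · exact Set.mem_insert_of_mem _ h
      · push_neg at hx
        -- x is an interior vertex: at most one structure contains it
        have hint : ∀ n, (x ∈ N.bead n ∨ x ∈ N.fwd n ∨ x ∈ N.bwd n) →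
            (x ∈ (N.fwd n).tail.dropLast ∨ x ∈ (N.bwd n).tail.dropLast) := by
          intro n hn
          rcases hn with hn | hn | hn
          · exact absurd hn (hx n)
          · rcases mem_list_cases (hfne n) hn with h | h | h
            · exact absurd (h ▸ hhead n) (hx n)
            · exact absurd (h ▸ hlast n) (hx (n+1))
            · exact Or.inl h
          · rcases mem_list_cases (hbne n) hn with h | h | h
            · exact absurd (h ▸ hbhead n) (hx (n+1))
            · exact absurd (h ▸ hblast n) (hx n)
            · exact Or.inr h
        refine Set.Subsingleton.finite ?_
        intro n hn n' hn'
        rcases hint n hn with h1 | h1 <;> rcases hint n' hn' with h2 | h2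
        · by_contra hc
          exact N.fwd_fwd_disj n n' hc x h1 h2
        · exact absurd h2 (N.fwd_bwd_disj n n' x h1)
        · exact absurd h1 (N.fwd_bwd_disj n' n x h2)
        · by_contra hc
          exact N.bwd_bwd_disj n n' hc x h1 h2
    have hbadfin : {n : ℕ | ∃ x ∈ X, x ∈ N.bead n ∨ x ∈ N.fwd n ∨ x ∈ N.bwd n}.Finite := by
      refine Set.Finite.subset (Set.Finite.biUnion X.finite_toSet (fun x _ => hfinx x)) ?_
      intro n hn
      obtain ⟨x, hx1, hx2⟩ := hn
      exact Set.mem_biUnion hx1 hx2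
    obtain ⟨b, hb⟩ := hbadfin.bddAbove
    have hgood : ∀ n, b + 1 ≤ n → ∀ x, x ∈ N.bead n ∨ x ∈ N.fwd n ∨ x ∈ N.bwd n →
        x ∈ ((↑X : Set V)ᶜ) := by
      intro n hn x hxst
      intro hxX
      have : n ≤ b := hb ⟨x, by simpa using hxX, hxst⟩
      omega
    set n₀ := b + 1 with hn₀
    obtain ⟨a₀, ha₀⟩ := N.bead_nonempty n₀
    have ha₀X : a₀ ∈ ((↑X : Set V)ᶜ) := hgood n₀ le_rfl a₀ (Or.inl ha₀)
    -- mutual reachability of all beads past n₀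
    have hreach : ∀ n, n₀ ≤ n → ∀ y ∈ N.bead n,
        ReachIn D ((↑X : Set V)ᶜ) a₀ y ∧ ReachIn D ((↑X : Set V)ᶜ) y a₀ := by
      intro n hn
      induction n, hn using Nat.le_induction with
      | base =>
        intro y hy
        have hsub : N.bead n₀ ⊆ ((↑X : Set V)ᶜ) := fun z hz => hgood n₀ le_rfl z (Or.inl hz)
        exact ⟨(N.bead_strong n₀ a₀ ha₀ y hy).monoS hsub,
          (N.bead_strong n₀ y hy a₀ ha₀).monoS hsub⟩
      | succ n hn ih =>
        intro y hy
        have hfX : ∀ z ∈ N.fwd n, z ∈ ((↑X : Set V)ᶜ) := fun z hz =>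
          hgood n (by omega) z (Or.inr (Or.inl hz))
        have hbX : ∀ z ∈ N.bwd n, z ∈ ((↑X : Set V)ᶜ) := fun z hz =>
          hgood n (by omega) z (Or.inr (Or.inr hz))
        have hbeadX : N.bead (n+1) ⊆ ((↑X : Set V)ᶜ) := fun z hz =>
          hgood (n+1) (by omega) z (Or.inl hz)
        have h1 : ReachIn D ((↑X : Set V)ᶜ) ((N.fwd n).head (hfne n))
            ((N.fwd n).getLast (hfne n)) :=
          walk_reachIn (N.fwd n) (hfch n) hfX (List.head?_eq_head (hfne n))
            (List.getLast?_eq_getLast_of_ne_nil (hfne n))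
        have h2 : ReachIn D ((↑X : Set V)ᶜ) ((N.bwd n).head (hbne n))
            ((N.bwd n).getLast (hbne n)) :=
          walk_reachIn (N.bwd n) (hbch n) hbX (List.head?_eq_head (hbne n))
            (List.getLast?_eq_getLast_of_ne_nil (hbne n))
        constructor
        · refine ((ih _ (hhead n)).1.trans h1).trans ?_
          exact (N.bead_strong (n+1) _ (hlast n) y hy).monoS hbeadX
        · refine ((N.bead_strong (n+1) y hy _ (hbhead n)).monoS hbeadX).trans
            (h2.trans ?_)
          exact (ih _ (hblast n)).2
    have hreachfwd : ∀ n, n₀ ≤ n → ∀ y ∈ N.fwd n,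
        ReachIn D ((↑X : Set V)ᶜ) a₀ y ∧ ReachIn D ((↑X : Set V)ᶜ) y a₀ := by
      intro n hn y hy
      have hfX : ∀ z ∈ N.fwd n, z ∈ ((↑X : Set V)ᶜ) := fun z hz =>
        hgood n (by omega) z (Or.inr (Or.inl hz))
      have hw := walk_mem_reach (hfch n) hfX (List.head?_eq_head (hfne n))
        (List.getLast?_eq_getLast_of_ne_nil (hfne n)) hy
      exact ⟨(hreach n hn _ (hhead n)).1.trans hw.1,
        hw.2.trans ((hreach (n+1) (by omega) _ (hlast n)).2)⟩
    refine ⟨sccOf D ((↑X : Set V)ᶜ) a₀, isSCCIn_sccOf ha₀X, ?_, ?_⟩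
    · -- tail in C
      obtain ⟨k, hk⟩ := htail n₀
      refine ⟨k, ?_⟩
      intro m hm
      obtain ⟨mm, hmm1, hmm2⟩ := hk m hm
      rcases hprof mm _ hmm2 with h | h
      · exact (hreach mm hmm1 _ h : _)
      · exact hreachfwd mm hmm1 _ (List.mem_of_mem_tail (mem_tail_of_mem_tail_dropLast h))
    · -- closure
      intro U hU
      obtain ⟨n, hnatt, hn⟩ := hatt.exists_gt n₀
      obtain ⟨y, hy1, hy2⟩ := hnatt U hU
      exact ⟨y, hreach n (by omega) y hy1, hy2⟩
  refine ⟨R, ⟨hray, ?_⟩, main⟩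
  intro X
  obtain ⟨C, h1, h2, _⟩ := main X
  exact ⟨C, h1, h2⟩

end NeckToEnd

section EndToDir

theorem end_to_direction {D : V → V → Prop} {𝒰 : Finset (Set V)}
    (h : ∃ R, Solid D R ∧ ∀ X : Finset V, ∃ C, IsSCCIn D ((↑X : Set V)ᶜ) C ∧ HasTailIn R C ∧
        ∀ U ∈ 𝒰, (C ∩ U).Nonempty) :
    ∃ f, IsVertexDirection D f ∧ ∀ X : Finset V, ∀ U ∈ 𝒰, (f X ∩ U).Nonempty := by
  obtain ⟨R, _, hC⟩ := h
  choose C hC1 hC2 hC3 using hC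
  refine ⟨C, ⟨hC1, ?_⟩, hC3⟩
  intro X Y hXY
  obtain ⟨nX, hnX⟩ := hC2 X
  obtain ⟨nY, hnY⟩ := hC2 Y
  have htX : R (max nX nY) ∈ C X := hnX _ (le_max_left _ _)
  have htY : R (max nX nY) ∈ C Y := hnY _ (le_max_right _ _)
  refine scc_subset_scc ?_ (hC1 Y) (hC1 X) htY htX
  exact Set.compl_subset_compl.2 (by exact_mod_cast hXY)

end EndToDir
/-- Equivalence of: an end in the closure of `𝒰`; a vertex-direction in the closure of `𝒰`;
a necklace attached to `𝒰`. -/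
theorem end_direction_necklace_closure (D : V → V → Prop) (𝒰 : Finset (Set V)) :
    ((∃ R, Solid D R ∧ ∀ X : Finset V, ∃ C, IsSCCIn D ((↑X : Set V)ᶜ) C ∧ HasTailIn R C ∧
        ∀ U ∈ 𝒰, (C ∩ U).Nonempty) ↔
      (∃ f, IsVertexDirection D f ∧ ∀ X : Finset V, ∀ U ∈ 𝒰, (f X ∩ U).Nonempty)) ∧
    ((∃ f, IsVertexDirection D f ∧ ∀ X : Finset V, ∀ U ∈ 𝒰, (f X ∩ U).Nonempty) ↔
      ∃ N : Necklace D, N.AttachedTo 𝒰) := by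
  constructor
  · constructor
    · exact end_to_direction
    · rintro ⟨f, hf, hcl⟩
      obtain ⟨N, hatt⟩ := direction_to_necklace hf hcl
      exact necklace_to_end N hatt
  · constructor
    · rintro ⟨f, hf, hcl⟩
      exact direction_to_necklace hf hcl
    · rintro ⟨N, hatt⟩
      exact end_to_direction (necklace_to_end N hatt)
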